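/- arXiv:1112.6415 — 7 statements merged into one kernel-verified Lean document; each statement's English description precedes it below -/
import Mathlib

section
/- Let G be a locally compact group with a proper cobounded (C,r)-quasi-action on a c-coarsely geodesic metric space X. Then G is compactly generated; specifically, for any fixed x ∈ X, the set K = {s ∈ G : d(s·x, x) ≤ C(2r+c+1)+4r} is relatively compact and every element of G is a product of finitely many elements of any compact symmetric neighbourhood of the identity containing K. -/
open Pointwise

/-- `f` is a `(C,r)`-quasi-isometric embedding. -/
def IsQIEmbedding {X Y : Type*} [PseudoMetricSpace X] [PseudoMetricSpace Y]
    (C r : ℝ) (f : X → Y) : Prop :=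
  ∀ x y : X, C⁻¹ * dist x y - r ≤ dist (f x) (f y) ∧ dist (f x) (f y) ≤ C * dist x y + r

/-- `f` is `r`-coarsely onto. -/
def IsCoarselyOnto {X Y : Type*} [PseudoMetricSpace X] [PseudoMetricSpace Y]
    (r : ℝ) (f : X → Y) : Prop :=
  ∀ y : Y, ∃ x : X, dist (f x) y ≤ r

/-- `f` is a `(C,r)`-quasi-isometry. -/
def IsQuasiIsometry {X Y : Type*} [PseudoMetricSpace X] [PseudoMetricSpace Y]
    (C r : ℝ) (f : X → Y) : Prop :=
  IsQIEmbedding C r f ∧ IsCoarselyOnto r f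


/-- `X` is `c`-coarsely geodesic. -/
def IsCoarselyGeodesic (X : Type*) [PseudoMetricSpace X] (c : ℝ) : Prop :=
  ∀ x y : X, ∃ a : ℝ, 0 ≤ a ∧ ∃ f : ℝ → X, f 0 = x ∧ f a = y ∧
    ∀ s ∈ Set.Icc (0:ℝ) a, ∀ t ∈ Set.Icc (0:ℝ) a,
      |s - t| - c ≤ dist (f s) (f t) ∧ dist (f s) (f t) ≤ |s - t| + c

/-- A `(C,r)`-quasi-action of a locally compact group on a metric space. -/
def IsQuasiAction {G X : Type*} [Group G] [TopologicalSpace G] [PseudoMetricSpace X]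
    (C r : ℝ) (act : G → X → X) : Prop :=
  (∀ s : G, IsQuasiIsometry C r (act s)) ∧
  (∀ x : X, dist (act 1 x) x ≤ r) ∧
  (∀ (s t : G) (x : X), dist (act s (act t x)) (act (s * t) x) ≤ r) ∧
  (∀ L : Set G, IsCompact L → ∀ x : X, Bornology.IsBounded ((fun s => act s x) '' L))

/-- A quasi-action is proper. -/
def IsProperQA {G X : Type*} [Group G] [TopologicalSpace G] [PseudoMetricSpace X]
    (act : G → X → X) : Prop :=
  ∀ R : ℝ, 0 ≤ R → ∀ x : X, IsCompact (closure {s : G | dist (act s x) x ≤ R})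

/-- A quasi-action is cobounded with constant `r`. -/
def IsCoboundedQA {G X : Type*} [Group G] [TopologicalSpace G] [PseudoMetricSpace X]
    (r : ℝ) (act : G → X → X) : Prop :=
  ∀ x y : X, ∃ s : G, dist (act s x) y ≤ r

/-- a group with a proper cobounded quasi-action on a coarsely geodesic
space is compactly generated, where the generating set may be taken to be any compact
symmetric neighbourhood of the identity containing
`{s : d(s·x, x) ≤ C(2r+c+1)+4r}` (which is relatively compact). -/
theorem svarc_milnor_compactly_generated
    {G X : Type*} [Group G] [TopologicalSpace G] [IsTopologicalGroup G]
    [LocallyCompactSpace G] [PseudoMetricSpace X]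
    (C r c : ℝ) (hC : 1 ≤ C) (hr : 0 ≤ r) (hc : 0 ≤ c)
    (hgeo : IsCoarselyGeodesic X c)
    (act : G → X → X)
    (hqa : IsQuasiAction C r act)
    (hproper : IsProperQA act)
    (hcob : IsCoboundedQA r act) :
    ∀ x : X,
      IsCompact (closure {s : G | dist (act s x) x ≤ C * (2*r + c + 1) + 4*r}) ∧
      ∀ V : Set G, IsCompact V → V ∈ nhds (1 : G) → V⁻¹ = V →
        {s : G | dist (act s x) x ≤ C * (2*r + c + 1) + 4*r} ⊆ V →
        ∀ g : G, ∃ n : ℕ, g ∈ V ^ n := by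
  classical
  intro x
  have h0C : (0:ℝ) ≤ C := le_trans zero_le_one hC
  have hM0 : (0:ℝ) ≤ C * (2*r + c + 1) + 4*r := by nlinarith
  refine ⟨hproper _ hM0 x, ?_⟩
  intro V _ _ _ hKV g
  obtain ⟨a, ha, f, hf0, hfa, hfgeo⟩ := hgeo x (act g x)
  set M : ℝ := C * (2*r + c + 1) + 4*r with hMdef
  set N : ℕ := ⌈a⌉₊ + 1 with hNdef
  set σ : ℕ → G := fun i => if i = 0 then (1:G) else if N ≤ i then g
    else Exists.choose (hcob x (f (min (i:ℝ) a))) with hσdef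
  have hIcc : ∀ i : ℕ, min (i:ℝ) a ∈ Set.Icc (0:ℝ) a := fun i =>
    ⟨le_min (Nat.cast_nonneg i) ha, min_le_right _ _⟩
  -- each σ i is within r of f(min i a)
  have hσdist : ∀ i : ℕ, dist (act (σ i) x) (f (min (i:ℝ) a)) ≤ r := by
    intro i
    rcases Nat.eq_zero_or_pos i with h0 | hpos
    · subst h0
      have hm : min ((0:ℕ):ℝ) a = 0 := by
        simp [min_eq_left ha]
      rw [hm, hf0]
      simp only [hσdef, if_pos rfl]
      exact hqa.2.1 x
    · have hne : i ≠ 0 := hpos.ne'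
      by_cases hN : N ≤ i
      · have haN : a ≤ (i:ℝ) := by
          have h1 : a ≤ (⌈a⌉₊ : ℝ) := Nat.le_ceil a
          have h2 : (⌈a⌉₊ : ℝ) ≤ (i:ℝ) := by
            have : ⌈a⌉₊ ≤ i := le_trans (Nat.le_succ _) hN
            exact_mod_cast this
          linarith
        simp only [hσdef, if_neg hne, if_pos hN]
        rw [min_eq_right haN, hfa]
        simpa using hr
      · simp only [hσdef, if_neg hne, if_neg hN]
        exact (hcob x (f (min (i:ℝ) a))).choose_spec
  -- consecutive parameters are within 1
  have hstep : ∀ i : ℕ, |min ((i+1:ℕ):ℝ) a - min (i:ℝ) a| ≤ 1 := by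
    intro i
    have hcast : ((i+1:ℕ):ℝ) = (i:ℝ) + 1 := by push_cast; ring
    rw [hcast]
    have hmono : min (i:ℝ) a ≤ min ((i:ℝ)+1) a := min_le_min (by linarith) le_rfl
    have hup : min ((i:ℝ)+1) a ≤ min (i:ℝ) a + 1 := by
      have h1 : min (i:ℝ) a + 1 = min ((i:ℝ)+1) (a+1) := (min_add_add_right _ _ _).symm
      rw [h1]
      exact min_le_min le_rfl (by linarith)
    rw [abs_le]
    constructor <;> linarith
  -- consecutive increments lie in K
  have hKmem : ∀ i : ℕ, dist (act ((σ i)⁻¹ * σ (i+1)) x) x ≤ M := by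
    intro i
    set u := σ i
    set v := σ (i+1)
    have d12 : dist (act v x) (act u x) ≤ 2*r + c + 1 := by
      have hA : dist (act v x) (f (min ((i+1:ℕ):ℝ) a)) ≤ r := hσdist (i+1)
      have hB : dist (f (min ((i+1:ℕ):ℝ) a)) (f (min (i:ℝ) a)) ≤
          |min ((i+1:ℕ):ℝ) a - min (i:ℝ) a| + c :=
        (hfgeo _ (hIcc (i+1)) _ (hIcc i)).2
      have hC2 : dist (f (min (i:ℝ) a)) (act u x) ≤ r := by
        rw [dist_comm]; exact hσdist i
      have htri := dist_triangle4 (act v x) (f (min ((i+1:ℕ):ℝ) a))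
        (f (min (i:ℝ) a)) (act u x)
      have := hstep i
      linarith
    have dQI : dist (act u⁻¹ (act v x)) (act u⁻¹ (act u x)) ≤ C * (2*r + c + 1) + r := by
      have h1 := ((hqa.1 u⁻¹).1 (act v x) (act u x)).2
      have h2 : C * dist (act v x) (act u x) ≤ C * (2*r + c + 1) :=
        mul_le_mul_of_nonneg_left d12 h0C
      linarith
    have h1 : dist (act (u⁻¹ * v) x) (act u⁻¹ (act v x)) ≤ r := by
      rw [dist_comm]; exact hqa.2.2.1 u⁻¹ v x
    have h3 : dist (act u⁻¹ (act u x)) (act (u⁻¹ * u) x) ≤ r := hqa.2.2.1 u⁻¹ u x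
    have h4 : dist (act (u⁻¹ * u) x) x ≤ r := by
      rw [inv_mul_cancel]; exact hqa.2.1 x
    have htriA := dist_triangle4 (act (u⁻¹ * v) x) (act u⁻¹ (act v x))
      (act u⁻¹ (act u x)) (act (u⁻¹ * u) x)
    have htriB := dist_triangle (act (u⁻¹ * v) x) (act (u⁻¹ * u) x) x
    rw [hMdef]
    linarith
  have hVmem : ∀ i : ℕ, (σ i)⁻¹ * σ (i+1) ∈ V := fun i => hKV (hKmem i)
  have hpow : ∀ i : ℕ, σ i ∈ V ^ i := by
    intro i
    induction i with
    | zero =>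
      have h0 : σ 0 = 1 := by simp only [hσdef, if_pos rfl]
      rw [pow_zero, h0]
      exact Set.mem_one.mpr rfl
    | succ n ih =>
      have hdecomp : σ (n+1) = σ n * ((σ n)⁻¹ * σ (n+1)) := by group
      rw [hdecomp, pow_succ]
      exact Set.mul_mem_mul ih (hVmem n)
  refine ⟨N, ?_⟩
  have hσN : σ N = g := by
    simp only [hσdef, hNdef]
    rw [if_neg (Nat.succ_ne_zero _), if_pos le_rfl]
  have := hpow N
  rwa [hσN] at this
end

section
/- Let G be a locally compact group with a proper cobounded quasi-action on a coarsely geodesic metric space X. Then for any fixed x ∈ X, the orbit map s ↦ s·x : G → X is a quasi-isometry, where G carries the word-length metric with respect to a compact symmetric generating neighbourhood of the identity. -/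
open Pointwise

/-- Word length of `s⁻¹ * t` with respect to the set `K`. -/
noncomputable def wordDist {G : Type*} [Group G] (K : Set G) (s t : G) : ℕ :=
  sInf {n : ℕ | s⁻¹ * t ∈ K ^ n}


/-- Chain lemma: products of consecutive steps in `K ^ N`. -/
lemma svarc_aux_chain {G : Type*} [Group G] (K : Set G) (N : ℕ) (g : ℕ → G) :
    ∀ m : ℕ, (∀ i < m, (g i)⁻¹ * g (i + 1) ∈ K ^ N) → (g 0)⁻¹ * g m ∈ K ^ (m * N) := by
  intro m
  induction m with
  | zero => intro _; simp
  | succ m ih =>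
    intro h
    have h1 := ih (fun i hi => h i (Nat.lt_succ_of_lt hi))
    have h2 := h m (Nat.lt_succ_self m)
    have heq : (g 0)⁻¹ * g (m + 1) = ((g 0)⁻¹ * g m) * ((g m)⁻¹ * g (m + 1)) := by group
    rw [heq, Nat.succ_mul, pow_add]
    exact Set.mul_mem_mul h1 h2

/-- Covering lemma: a compact set is contained in some power of a generating
neighbourhood of the identity. -/
lemma svarc_aux_cover {G : Type*} [Group G] [TopologicalSpace G] [IsTopologicalGroup G]
    (K : Set G) (hK1 : (1 : G) ∈ interior K)
    (hKgen : ∀ g : G, ∃ n : ℕ, g ∈ K ^ n)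
    {L : Set G} (hL : IsCompact L) : ∃ N : ℕ, L ⊆ K ^ N := by
  have hopen : ∀ n : ℕ, IsOpen (K ^ n * interior K) := fun n => isOpen_interior.mul_left
  have hcov : L ⊆ ⋃ n : ℕ, K ^ n * interior K := by
    intro g _
    obtain ⟨n, hn⟩ := hKgen g
    exact Set.mem_iUnion.2 ⟨n, mul_one g ▸ Set.mul_mem_mul hn hK1⟩
  obtain ⟨F, hF⟩ := hL.elim_finite_subcover _ hopen hcov
  refine ⟨F.sup id + 1, fun g hg => ?_⟩
  obtain ⟨n, hnF, hgn⟩ := Set.mem_iUnion₂.1 (hF hg)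
  have hsub : K ^ n * interior K ⊆ K ^ (n + 1) := by
    rw [pow_succ]
    exact Set.mul_subset_mul_left interior_subset
  exact Set.pow_subset_pow_right (interior_subset hK1)
    (Nat.succ_le_succ (Finset.le_sup (f := id) hnF)) (hsub hgn)

/-- for a proper cobounded quasi-action on a coarsely geodesic space,
every orbit map is a quasi-isometry with respect to the word-length metric coming
from a compact symmetric generating neighbourhood of the identity. -/
theorem svarc_milnor_orbit_map_quasi_isometry
    {G X : Type*} [Group G] [TopologicalSpace G] [IsTopologicalGroup G]
    [LocallyCompactSpace G] [PseudoMetricSpace X]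
    (C r c : ℝ) (hC : 1 ≤ C) (hr : 0 ≤ r) (hc : 0 ≤ c)
    (hgeo : IsCoarselyGeodesic X c)
    (act : G → X → X)
    (hqa : IsQuasiAction C r act)
    (hproper : IsProperQA act)
    (hcob : IsCoboundedQA r act)
    (K : Set G) (hKcomp : IsCompact K) (hKnhds : K ∈ nhds (1 : G)) (hKsymm : K⁻¹ = K)
    (hKgen : ∀ g : G, ∃ n : ℕ, g ∈ K ^ n) :
    ∀ x : X, ∃ C' r' : ℝ, 1 ≤ C' ∧ 0 ≤ r' ∧
      (∀ s t : G,
        C'⁻¹ * (wordDist K s t : ℝ) - r' ≤ dist (act s x) (act t x) ∧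
        dist (act s x) (act t x) ≤ C' * (wordDist K s t : ℝ) + r') ∧
      (∀ y : X, ∃ s : G, dist (act s x) y ≤ r') := by
  intro x
  obtain ⟨hQI, hone, hcomp_ax, hbdd⟩ := hqa
  have hC0 : (0 : ℝ) < C := lt_of_lt_of_le one_pos hC
  have hK1 : (1 : G) ∈ K := mem_of_mem_nhds hKnhds
  -- bound on the K-orbit
  obtain ⟨B0, hB0⟩ := Metric.isBounded_iff.1 (hbdd K hKcomp x)
  have hB0nonneg : (0 : ℝ) ≤ B0 := le_trans dist_nonneg
    (hB0 (Set.mem_image_of_mem _ hK1) (Set.mem_image_of_mem _ hK1))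
  set B : ℝ := B0 + r with hBdef
  have hBk : ∀ k ∈ K, dist (act k x) x ≤ B := by
    intro k hk
    calc dist (act k x) x ≤ dist (act k x) (act 1 x) + dist (act 1 x) x := dist_triangle _ _ _
      _ ≤ B0 + r := add_le_add
          (hB0 (Set.mem_image_of_mem _ hk) (Set.mem_image_of_mem _ hK1)) (hone x)
  have hBpos : (0 : ℝ) ≤ B := by simp only [hBdef]; linarith
  set A : ℝ := C * B + 2 * r with hAdef
  have hApos : (0 : ℝ) ≤ A := by
    have : 0 ≤ C * B := mul_nonneg hC0.le hBpos
    simp only [hAdef]; linarith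
  -- upper bound on orbit distances in terms of word length
  have upb : ∀ n : ℕ, ∀ g ∈ K ^ n, dist (act g x) x ≤ n * A + r := by
    intro n
    induction n with
    | zero =>
      intro g hg
      rw [pow_zero, Set.mem_one] at hg
      subst hg
      simpa using hone x
    | succ n ih =>
      intro g hg
      rw [pow_succ] at hg
      obtain ⟨h', hh', k, hk, rfl⟩ := hg
      have hkb := hBk k hk
      calc dist (act (h' * k) x) x
          ≤ dist (act (h' * k) x) (act h' (act k x)) + dist (act h' (act k x)) (act h' x)
              + dist (act h' x) x := dist_triangle4 _ _ _ _
        _ ≤ r + (C * dist (act k x) x + r) + (n * A + r) := by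
            refine add_le_add (add_le_add ?_ ?_) (ih h' hh')
            · rw [dist_comm]; exact hcomp_ax h' k x
            · exact ((hQI h').1 (act k x) x).2
        _ ≤ (n + 1 : ℕ) * A + r := by
            push_cast
            have h1 : C * dist (act k x) x ≤ C * B :=
              mul_le_mul_of_nonneg_left hkb hC0.le
            simp only [hAdef]; nlinarith
  -- comparing different orbit points
  have key_low : ∀ u v : G,
      dist (act (u⁻¹ * v) x) x ≤ C * (dist (act u x) (act v x) + 2 * r) := by
    intro u v
    have h1' := ((hQI u).1 (act (u⁻¹ * v) x) x).1
    have hcomp' : dist (act u (act (u⁻¹ * v) x)) (act v x) ≤ r := by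
      have := hcomp_ax u (u⁻¹ * v) x
      rwa [mul_inv_cancel_left] at this
    have h2' : dist (act u (act (u⁻¹ * v) x)) (act u x) ≤ dist (act u x) (act v x) + r := by
      calc dist (act u (act (u⁻¹ * v) x)) (act u x)
          ≤ dist (act u (act (u⁻¹ * v) x)) (act v x) + dist (act v x) (act u x) :=
            dist_triangle _ _ _
        _ ≤ r + dist (act u x) (act v x) := add_le_add hcomp' (dist_comm (act v x) (act u x)).le
        _ = _ := by ring
    have h3' : C⁻¹ * dist (act (u⁻¹ * v) x) x - r ≤ dist (act u x) (act v x) + r :=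
      le_trans h1' h2'
    have h4' : C * (C⁻¹ * dist (act (u⁻¹ * v) x) x) = dist (act (u⁻¹ * v) x) x := by
      field_simp
    nlinarith [mul_le_mul_of_nonneg_left h3' hC0.le]
  have key_up : ∀ u v : G,
      dist (act u x) (act v x) ≤ C * dist (act (u⁻¹ * v) x) x + 2 * r := by
    intro u v
    have hcomp' : dist (act u (act (u⁻¹ * v) x)) (act v x) ≤ r := by
      have := hcomp_ax u (u⁻¹ * v) x
      rwa [mul_inv_cancel_left] at this
    calc dist (act u x) (act v x)
        ≤ dist (act u x) (act u (act (u⁻¹ * v) x)) + dist (act u (act (u⁻¹ * v) x)) (act v x) :=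
          dist_triangle _ _ _
      _ ≤ (C * dist (act (u⁻¹ * v) x) x + r) + r := by
          refine add_le_add ?_ hcomp'
          rw [dist_comm]
          exact ((hQI u).1 (act (u⁻¹ * v) x) x).2
      _ = C * dist (act (u⁻¹ * v) x) x + 2 * r := by ring
  -- properness: compact set of small translations
  set R : ℝ := C * ((2 * r + (1 + c)) + 2 * r) with hRdef
  have hRpos : (0 : ℝ) ≤ R := by
    have : (0:ℝ) ≤ (2 * r + (1 + c)) + 2 * r := by linarith
    exact mul_nonneg hC0.le this
  obtain ⟨N0, hN0⟩ := svarc_aux_cover K (mem_interior_iff_mem_nhds.2 hKnhds) hKgen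
    (hproper R hRpos x)
  set N : ℕ := max N0 1 with hNdef
  have hN1 : 1 ≤ N := le_max_right _ _
  have hSN : {g : G | dist (act g x) x ≤ R} ⊆ K ^ N := fun g hg =>
    Set.pow_subset_pow_right hK1 (le_max_left _ _) (hN0 (subset_closure hg))
  -- the constants
  refine ⟨max (max (C * A) (N : ℝ)) 1, max (max (C * r + 2 * r) (c + 1)) r,
    le_max_right _ _, le_trans hr (le_max_right _ _), fun s t => ?_, fun y => ?_⟩
  swap
  · obtain ⟨s, hs⟩ := hcob x y
    exact ⟨s, le_trans hs (le_max_right _ _)⟩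
  set C' : ℝ := max (max (C * A) (N : ℝ)) 1 with hC'def
  set r' : ℝ := max (max (C * r + 2 * r) (c + 1)) r with hr'def
  have hC'1 : (1 : ℝ) ≤ C' := le_max_right _ _
  have hC'pos : (0 : ℝ) < C' := lt_of_lt_of_le one_pos hC'1
  have hNC' : (N : ℝ) ≤ C' := le_trans (le_max_right _ _) (le_max_left _ _)
  have hCAC' : C * A ≤ C' := le_trans (le_max_left _ _) (le_max_left _ _)
  have hr'1 : C * r + 2 * r ≤ r' := le_trans (le_max_left _ _) (le_max_left _ _)
  have hr'2 : c + 1 ≤ r' := le_trans (le_max_right _ _) (le_max_left _ _)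
  constructor
  · -- lower bound: word length controlled by distance
    set D : ℝ := dist (act s x) (act t x) with hDdef
    have hD0 : (0 : ℝ) ≤ D := dist_nonneg
    obtain ⟨a, ha0, f, hf0, hfa, hfgeo⟩ := hgeo (act s x) (act t x)
    have haD : a ≤ D + c := by
      have h := (hfgeo a ⟨ha0, le_refl a⟩ 0 ⟨le_refl 0, ha0⟩).1
      rw [hf0, hfa, dist_comm] at h
      rw [sub_zero, abs_of_nonneg ha0] at h
      simp only [hDdef]; linarith
    set m : ℕ := max ⌈a⌉₊ 1 with hmdef
    have hm1 : 1 ≤ m := le_max_right _ _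
    have hm0 : m ≠ 0 := by omega
    have ham : a ≤ (m : ℝ) := le_trans (Nat.le_ceil a) (by exact_mod_cast Nat.le_max_left _ _)
    have hmle : (m : ℝ) ≤ a + 1 := by
      have h1 : ((⌈a⌉₊ : ℕ) : ℝ) < a + 1 := Nat.ceil_lt_add_one ha0
      have h2 : (1 : ℝ) ≤ a + 1 := by linarith
      rw [hmdef]
      push_cast
      exact max_le h1.le h2
    set y : ℕ → X := fun i => f (min (i : ℝ) a) with hydef
    set g : ℕ → G := fun i =>
      if i = 0 then s else if i = m then t else Classical.choose (hcob x (y i)) with hgdef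
    have hmin_mem : ∀ i : ℕ, min (i : ℝ) a ∈ Set.Icc (0 : ℝ) a :=
      fun i => ⟨le_min (Nat.cast_nonneg i) ha0, min_le_right _ _⟩
    have hyg : ∀ i ≤ m, dist (act (g i) x) (y i) ≤ r := by
      intro i hi
      by_cases h0 : i = 0
      · subst h0
        have : y 0 = act s x := by
          simp only [hydef, Nat.cast_zero, min_eq_left ha0, hf0]
        simp only [hgdef, if_pos rfl, this, dist_self]
        exact hr
      · by_cases hmi : i = m
        · subst hmi
          have hgm' : g m = t := by simp [hgdef, h0]
          have hym : y m = act t x := by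
            simp only [hydef]; rw [min_eq_right ham, hfa]
          rw [hgm', hym, dist_self]
          exact hr
        · simp only [hgdef, if_neg h0, if_neg hmi]
          exact Classical.choose_spec (hcob x (y i))
    have hystep : ∀ i : ℕ, dist (y (i + 1)) (y i) ≤ 1 + c := by
      intro i
      have hgeo' := (hfgeo _ (hmin_mem (i + 1)) _ (hmin_mem i)).2
      have habs : |min ((i + 1 : ℕ) : ℝ) a - min (i : ℝ) a| ≤ 1 := by
        push_cast
        rcases le_total a (i : ℝ) with h | h
        · rw [min_eq_right h, min_eq_right (by linarith : a ≤ (i : ℝ) + 1)]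
          simp
        · rw [min_eq_left h]
          have hub : min ((i : ℝ) + 1) a ≤ (i : ℝ) + 1 := min_le_left _ _
          have hlb : (i : ℝ) ≤ min ((i : ℝ) + 1) a := le_min (by linarith) h
          rw [abs_le]
          constructor <;> linarith
      calc dist (y (i + 1)) (y i) ≤ |min ((i + 1 : ℕ) : ℝ) a - min (i : ℝ) a| + c := hgeo'
        _ ≤ 1 + c := by linarith
    have hstep : ∀ i < m, (g i)⁻¹ * g (i + 1) ∈ K ^ N := by
      intro i hi
      apply hSN
      have hd : dist (act (g i) x) (act (g (i + 1)) x) ≤ 2 * r + (1 + c) := by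
        calc dist (act (g i) x) (act (g (i + 1)) x)
            ≤ dist (act (g i) x) (y i) + dist (y i) (y (i + 1))
                + dist (y (i + 1)) (act (g (i + 1)) x) := dist_triangle4 _ _ _ _
          _ ≤ r + (1 + c) + r := by
              refine add_le_add (add_le_add (hyg i hi.le) ?_) ?_
              · rw [dist_comm]; exact hystep i
              · rw [dist_comm]; exact hyg (i + 1) hi
          _ = 2 * r + (1 + c) := by ring
      show dist (act ((g i)⁻¹ * g (i + 1)) x) x ≤ R
      refine le_trans (key_low (g i) (g (i + 1))) ?_
      rw [hRdef]
      have : dist (act (g i) x) (act (g (i + 1)) x) + 2 * r ≤ (2 * r + (1 + c)) + 2 * r := by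
        linarith
      exact mul_le_mul_of_nonneg_left this hC0.le
    have hchain := svarc_aux_chain K N g m hstep
    have hg0 : g 0 = s := by simp only [hgdef, if_pos rfl]
    have hgm : g m = t := by simp [hgdef, hm0]
    rw [hg0, hgm] at hchain
    have hword : wordDist K s t ≤ m * N := Nat.sInf_le hchain
    have hwordR : (wordDist K s t : ℝ) ≤ (m : ℝ) * (N : ℝ) := by exact_mod_cast hword
    have hwordle : (wordDist K s t : ℝ) ≤ (N : ℝ) * (D + c + 1) := by
      have hN0' : (0 : ℝ) ≤ (N : ℝ) := Nat.cast_nonneg N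
      have : (m : ℝ) ≤ D + c + 1 := by linarith
      calc (wordDist K s t : ℝ) ≤ (m : ℝ) * (N : ℝ) := hwordR
        _ ≤ (D + c + 1) * (N : ℝ) := mul_le_mul_of_nonneg_right this hN0'
        _ = (N : ℝ) * (D + c + 1) := by ring
    -- finish
    have hDc1 : (0 : ℝ) ≤ D + c + 1 := by linarith
    have hC'inv : (0 : ℝ) < C'⁻¹ := inv_pos.2 hC'pos
    have h1 : C'⁻¹ * (wordDist K s t : ℝ) ≤ C'⁻¹ * ((N : ℝ) * (D + c + 1)) :=
      mul_le_mul_of_nonneg_left hwordle hC'inv.le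
    have h4 : C'⁻¹ * (N : ℝ) ≤ 1 := by
      have := mul_le_mul_of_nonneg_left hNC' hC'inv.le
      rwa [inv_mul_cancel₀ hC'pos.ne'] at this
    have h3 : (C'⁻¹ * (N : ℝ)) * (D + c + 1) ≤ 1 * (D + c + 1) :=
      mul_le_mul_of_nonneg_right h4 hDc1
    have h2 : C'⁻¹ * ((N : ℝ) * (D + c + 1)) = (C'⁻¹ * (N : ℝ)) * (D + c + 1) := by ring
    have : C'⁻¹ * (wordDist K s t : ℝ) ≤ D + c + 1 := by
      rw [h2] at h1; linarith
    linarith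
  · -- upper bound
    have hne : {n : ℕ | s⁻¹ * t ∈ K ^ n}.Nonempty := hKgen (s⁻¹ * t)
    have hmem : s⁻¹ * t ∈ K ^ (wordDist K s t) := Nat.sInf_mem hne
    have h1 := upb (wordDist K s t) (s⁻¹ * t) hmem
    have h2 := key_up s t
    have hw0 : (0 : ℝ) ≤ (wordDist K s t : ℝ) := Nat.cast_nonneg _
    have h3 : C * dist (act (s⁻¹ * t) x) x ≤ C * ((wordDist K s t : ℝ) * A + r) :=
      mul_le_mul_of_nonneg_left h1 hC0.le
    have h4 : (C * A) * (wordDist K s t : ℝ) ≤ C' * (wordDist K s t : ℝ) :=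
      mul_le_mul_of_nonneg_right hCAC' hw0
    calc dist (act s x) (act t x) ≤ C * dist (act (s⁻¹ * t) x) x + 2 * r := h2
      _ ≤ C * ((wordDist K s t : ℝ) * A + r) + 2 * r := by linarith
      _ = (C * A) * (wordDist K s t : ℝ) + (C * r + 2 * r) := by ring
      _ ≤ C' * (wordDist K s t : ℝ) + r' := add_le_add h4 hr'1
end

section
/- Let G be a compactly generated locally compact group and H a closed cocompact subgroup of G. Then H is compactly generated, and the inclusion H → G is a quasi-isometry with respect to word-length metrics. -/
open Pointwise

/-- a closed cocompact subgroup `H` of a compactly generated locally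
compact group `G` is compactly generated, and the inclusion `H → G` is a
quasi-isometry with respect to word-length metrics. -/
theorem cocompact_subgroup_compactly_generated_and_qi
    {G : Type*} [Group G] [TopologicalSpace G] [IsTopologicalGroup G] [LocallyCompactSpace G]
    (K : Set G) (hKcomp : IsCompact K) (hKnhds : K ∈ nhds (1 : G)) (hKsymm : K⁻¹ = K)
    (hKgen : ∀ g : G, ∃ n : ℕ, g ∈ K ^ n)
    (H : Subgroup G) (hHclosed : IsClosed (H : Set G)) (hHcc : CompactSpace (G ⧸ H)) :
    ∃ L : Set G, L ⊆ (H : Set G) ∧ IsCompact L ∧ L⁻¹ = L ∧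
      (∃ U : Set G, IsOpen U ∧ (1 : G) ∈ U ∧ U ∩ (H : Set G) ⊆ L) ∧
      (∀ h ∈ (H : Set G), ∃ n : ℕ, h ∈ L ^ n) ∧
      ∃ C r : ℝ, 1 ≤ C ∧ 0 ≤ r ∧
        (∀ h ∈ (H : Set G), ∀ h' ∈ (H : Set G),
          C⁻¹ * (wordDist L h h' : ℝ) - r ≤ (wordDist K h h' : ℝ) ∧
          (wordDist K h h' : ℝ) ≤ C * (wordDist L h h' : ℝ) + r) ∧
        (∀ g : G, ∃ h ∈ (H : Set G), (wordDist K h g : ℝ) ≤ r) := by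
  have h1K : (1 : G) ∈ K := mem_of_mem_nhds hKnhds
  -- Step 1: a compact set M₀ with M₀ * H = G
  obtain ⟨M₀, hM₀comp, hM₀cov⟩ :
      ∃ M₀ : Set G, IsCompact M₀ ∧ ∀ g : G, ∃ m ∈ M₀, ∃ h ∈ (H : Set G), g = m * h := by
    choose C hCcomp hCnhds using fun g : G => exists_compact_mem_nhds g
    have hcov : (Set.univ : Set (G ⧸ H)) ⊆
        ⋃ g : G, ((QuotientGroup.mk : G → G ⧸ H) '' interior (C g)) := by
      intro q _
      obtain ⟨g, rfl⟩ := QuotientGroup.mk_surjective q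
      exact Set.mem_iUnion.2 ⟨g, ⟨g, mem_interior_iff_mem_nhds.2 (hCnhds g), rfl⟩⟩
    obtain ⟨t, ht⟩ := isCompact_univ.elim_finite_subcover
      (fun g : G => (QuotientGroup.mk : G → G ⧸ H) '' interior (C g))
      (fun g => QuotientGroup.isOpenMap_coe _ isOpen_interior) hcov
    refine ⟨⋃ g ∈ t, C g, t.isCompact_biUnion (fun g _ => hCcomp g), fun g => ?_⟩
    have : (g : G ⧸ H) ∈ ⋃ g₀ ∈ t, (QuotientGroup.mk : G → G ⧸ H) '' interior (C g₀) :=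
      ht (Set.mem_univ _)
    obtain ⟨g₀, hg₀t, y, hy, hyg⟩ := Set.mem_iUnion₂.1 this
    refine ⟨y, Set.mem_biUnion hg₀t (interior_subset hy), y⁻¹ * g, ?_, by group⟩
    exact (QuotientGroup.eq ).1 hyg
  -- Step 2: symmetrize
  set M : Set G := (M₀ ∪ M₀⁻¹) ∪ {1} with hM
  have hMcomp : IsCompact M := (hM₀comp.union hM₀comp.inv).union isCompact_singleton
  have h1M : (1 : G) ∈ M := Set.mem_union_right _ rfl
  have hMsymm : M⁻¹ = M := by
    rw [hM, Set.union_inv, Set.union_inv, Set.inv_singleton, inv_one, inv_inv,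
      Set.union_comm M₀⁻¹ M₀]
  have hMcov : ∀ g : G, ∃ h ∈ (H : Set G), ∃ m ∈ M, g = h * m := by
    intro g
    obtain ⟨m, hm, h, hh, hgh⟩ := hM₀cov g⁻¹
    refine ⟨h⁻¹, inv_mem hh, m⁻¹, Set.mem_union_left _ (Set.mem_union_right _ (Set.inv_mem_inv.2 hm)), ?_⟩
    rw [← inv_inv g, hgh]; group
  -- Step 3: M ⊆ K ^ N
  obtain ⟨N, hMN⟩ : ∃ N : ℕ, M ⊆ K ^ N := by
    choose n hn using hKgen
    have hcov : M ⊆ ⋃ g : G, (fun x => g * x) '' interior K := by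
      intro m hm
      exact Set.mem_iUnion.2 ⟨m, 1, mem_interior_iff_mem_nhds.2 hKnhds, mul_one m⟩
    obtain ⟨t, ht⟩ := hMcomp.elim_finite_subcover _
      (fun g => (isOpenMap_mul_left g) _ isOpen_interior) hcov
    refine ⟨(t.sup n) + 1, fun m hm => ?_⟩
    obtain ⟨g, hgt, x, hx, hxm⟩ := Set.mem_iUnion₂.1 (ht hm)
    have : m ∈ K ^ (n g) * K := by
      exact ⟨g, hn g, x, interior_subset hx, hxm⟩
    have h1 : K ^ (n g) * K = K ^ (n g + 1) := (pow_succ K (n g)).symm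
    rw [h1] at this
    exact Set.pow_subset_pow_right h1K (Nat.succ_le_succ (Finset.le_sup hgt)) this
  -- Step 4: define L
  set L : Set G := (H : Set G) ∩ (M * K * M) with hL
  have hLH : L ⊆ (H : Set G) := Set.inter_subset_left
  have hKMKM : K ⊆ M * K * M := fun k hk => by
    refine ⟨1 * k, ⟨1, h1M, k, hk, rfl⟩, 1, h1M, by group⟩
  have hMMKM : M ⊆ M * K * M := fun m hm => by
    refine ⟨1 * 1, ⟨1, h1M, 1, h1K, rfl⟩, m, hm, by group⟩
  have hLcomp : IsCompact L := (((hMcomp.mul hKcomp).mul hMcomp).inter_left hHclosed)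
  have hLsymm : L⁻¹ = L := by
    have : (M * K * M)⁻¹ = M * K * M := by
      rw [mul_inv_rev, mul_inv_rev, hMsymm, hKsymm, mul_assoc]
    rw [hL, Set.inter_inv, this]
    congr 1
    ext x; simp [Subgroup.inv_mem_iff]
  have hLHpow : ∀ n : ℕ, L ^ n ⊆ (H : Set G) := by
    intro n
    induction n with
    | zero => simp only [pow_zero]; intro x hx; rw [Set.mem_one] at hx; rw [hx]; exact one_mem H
    | succ n ih =>
      rw [pow_succ]
      exact Set.mul_subset_iff.2 fun a ha b hb => mul_mem (ih ha) (hLH hb)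
  -- key structural lemma
  have key : ∀ n : ℕ, ∀ g ∈ K ^ n, ∃ h ∈ L ^ n, ∃ m ∈ M, g = h * m := by
    intro n
    induction n with
    | zero =>
      intro g hg
      rw [pow_zero] at hg
      exact ⟨1, by rw [pow_zero]; exact rfl, 1, h1M, by simpa using hg⟩
    | succ n ih =>
      intro g hg
      rw [pow_succ] at hg
      obtain ⟨g', hg', k, hk, rfl⟩ := hg
      obtain ⟨h', hh', m', hm', rfl⟩ := ih g' hg'
      obtain ⟨h₂, hh₂, m₂, hm₂, hdec⟩ := hMcov (m' * k)
      have hh₂L : h₂ ∈ L := by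
        refine ⟨hh₂, ?_⟩
        have : h₂ = m' * k * m₂⁻¹ := by rw [hdec]; group
        rw [this]
        have hm₂inv : m₂⁻¹ ∈ M := by rw [← hMsymm]; exact Set.inv_mem_inv.2 hm₂
        exact Set.mul_mem_mul (Set.mul_mem_mul hm' hk) hm₂inv
      refine ⟨h' * h₂, by rw [pow_succ]; exact Set.mul_mem_mul hh' hh₂L, m₂, hm₂, ?_⟩
      show h' * m' * k = h' * h₂ * m₂
      rw [mul_assoc h' m' k, hdec, ← mul_assoc]
  -- corollary: h ∈ H ∩ K^n → h ∈ L^(n+1)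
  have keyH : ∀ n : ℕ, ∀ x ∈ (H : Set G), x ∈ K ^ n → x ∈ L ^ (n + 1) := by
    intro n x hxH hxK
    obtain ⟨h, hhL, m, hmM, rfl⟩ := key n x hxK
    have hmH : m ∈ (H : Set G) := by
      have := hLHpow n hhL
      have : h⁻¹ * (h * m) ∈ H := mul_mem (inv_mem this) hxH
      simpa using this
    have hmL : m ∈ L := ⟨hmH, hMMKM hmM⟩
    rw [pow_succ]
    exact Set.mul_mem_mul hhL hmL
  -- L ⊆ K ^ (2N+1), hence L^n ⊆ K^((2N+1)n)
  have hLK : L ⊆ K ^ (2 * N + 1) := by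
    intro x hx
    have : x ∈ M * K * M := hx.2
    have h2 : M * K * M ⊆ K ^ N * K ^ 1 * K ^ N :=
      Set.mul_subset_mul (Set.mul_subset_mul hMN (by rw [pow_one])) hMN
    have := h2 this
    rw [← pow_add, ← pow_add] at this
    convert this using 2
    ring
  have hgenL : ∀ h ∈ (H : Set G), ∃ n : ℕ, h ∈ L ^ n := by
    intro h hh
    obtain ⟨n, hn⟩ := hKgen h
    exact ⟨n + 1, keyH n h hh hn⟩
  refine ⟨L, hLH, hLcomp, hLsymm,
    ⟨interior K, isOpen_interior, mem_interior_iff_mem_nhds.2 hKnhds,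
      fun x hx => ⟨hx.2, hKMKM (interior_subset hx.1)⟩⟩, hgenL,
    (2 * N + 1 : ℝ), (N : ℝ) + 1,
    by have := Nat.cast_nonneg (α := ℝ) N; linarith,
    by have := Nat.cast_nonneg (α := ℝ) N; linarith, ?_, ?_⟩
  · intro h hh h' hh'
    set x := h⁻¹ * h' with hx
    have hxH : x ∈ (H : Set G) := mul_mem (inv_mem hh) hh'
    have hSK : {n : ℕ | x ∈ K ^ n}.Nonempty := hKgen x
    have hSL : {n : ℕ | x ∈ L ^ n}.Nonempty := hgenL x hxH
    set dK := wordDist K h h' with hdK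
    set dL := wordDist L h h' with hdL
    have hxKd : x ∈ K ^ dK := Nat.sInf_mem hSK
    have hxLd : x ∈ L ^ dL := Nat.sInf_mem hSL
    have h1 : dL ≤ dK + 1 := Nat.sInf_le (keyH dK x hxH hxKd)
    have h2 : dK ≤ (2 * N + 1) * dL := by
      apply Nat.sInf_le
      have : L ^ dL ⊆ (K ^ (2 * N + 1)) ^ dL := Set.pow_subset_pow_left hLK
      rw [← pow_mul] at this
      exact this hxLd
    constructor
    · have hC1 : (1 : ℝ) ≤ 2 * N + 1 := by
        have := Nat.cast_nonneg (α := ℝ) N; linarith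
      have hinv : (2 * (N : ℝ) + 1)⁻¹ ≤ 1 := by
        rw [inv_le_one_iff₀]; right; exact hC1
      have hd1 : (dL : ℝ) ≤ dK + 1 := by exact_mod_cast h1
      have hd0 : (0 : ℝ) ≤ dL := Nat.cast_nonneg _
      nlinarith
    · have hd2 : (dK : ℝ) ≤ (2 * N + 1) * dL := by exact_mod_cast h2
      have hd0 : (0 : ℝ) ≤ N := Nat.cast_nonneg _
      push_cast at hd2 ⊢
      linarith
  · intro g
    obtain ⟨h, hh, m, hm, rfl⟩ := hMcov g
    refine ⟨h, hh, ?_⟩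
    have : wordDist K h (h * m) ≤ N := by
      apply Nat.sInf_le
      show h⁻¹ * (h * m) ∈ K ^ N
      simpa using hMN hm
    calc (wordDist K h (h * m) : ℝ) ≤ N := by exact_mod_cast this
      _ ≤ N + 1 := by linarith
end

section
/- In the hyperbolic plane H² = {(u,a) ∈ ℝ² : a > 0} with the hyperbolic metric, the set X = {(eⁿm, eⁿ) : n, m ∈ ℤ} is coarsely dense: every point of H² is within hyperbolic distance 2·tanh⁻¹(√((1/4 + (e^{1/2}−1)²)/(1/4 + (e^{−1/2}+1)²))) of X. -/
/-- The hyperbolic metric on the upper half-plane, viewed inside `ℂ`: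
`d(x,y) = log((|x−ȳ|+|x−y|)/(|x−ȳ|−|x−y|))`. -/
noncomputable def hypDist (x y : ℂ) : ℝ :=
  Real.log ((‖x - (starRingEnd ℂ) y‖ + ‖x - y‖) /
            (‖x - (starRingEnd ℂ) y‖ - ‖x - y‖))

/-- The point `(eⁿ m, eⁿ)` of the upper half-plane. -/
noncomputable def latticePt (n m : ℤ) : ℂ :=
  (Real.exp n * m : ℝ) + (Real.exp n : ℝ) * Complex.I

private lemma key_ineq (E a d e1 e2 : ℝ) (hE : 0 < E) (ha : 0 < a)
    (hd : d^2 ≤ E^2/4)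
    (hu : a ≤ E*e1) (hl : E*e2 ≤ a)
    (he2 : 0 < e2) (hsum : 2 ≤ e1 + e2) :
    (d^2+(E-a)^2) * (1/4+(e2+1)^2) ≤ (d^2+(E+a)^2) * (1/4+(e1-1)^2) := by
  set N := 1/4+(e1-1)^2 with hN
  set D := 1/4+(e2+1)^2 with hD
  have hN0 : 0 < N := by positivity
  have hD0 : 0 < D := by positivity
  set P := E^2/4 with hP
  have h1 : (E-a)^2 ≤ E^2*(e1-1)^2 := by
    have e1' : E - a ≤ E*(e1-1) := by nlinarith [mul_nonneg hE.le (by linarith : (0:ℝ) ≤ e1+e2-2)]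
    have e2' : -(E*(e1-1)) ≤ E - a := by nlinarith
    have := sq_le_sq' e2' e1'
    calc (E-a)^2 ≤ (E*(e1-1))^2 := this
      _ = E^2*(e1-1)^2 := by ring
  have h2 : E^2*(e2+1)^2 ≤ (E+a)^2 := by
    have e1' : E*(e2+1) ≤ E + a := by nlinarith
    have e0 : 0 ≤ E*(e2+1) := by positivity
    calc E^2*(e2+1)^2 = (E*(e2+1))^2 := by ring
      _ ≤ (E+a)^2 := by nlinarith
  have s1 : (d^2+(E-a)^2) * (P+(E+a)^2) ≤ (P+(E-a)^2) * (d^2+(E+a)^2) := by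
    have hiden : (P+(E-a)^2) * (d^2+(E+a)^2) - (d^2+(E-a)^2) * (P+(E+a)^2)
        = (P - d^2) * (4*E*a) := by ring
    nlinarith [mul_nonneg (by linarith : (0:ℝ) ≤ P - d^2)
      (by positivity : (0:ℝ) ≤ 4*E*a)]
  have s2 : (P+(E-a)^2) * D ≤ (P+(E+a)^2) * N := by
    have hiden : (P+(E+a)^2)*N - (P+(E-a)^2)*D
        = N*((E+a)^2 - E^2*(e2+1)^2) + D*(E^2*(e1-1)^2 - (E-a)^2) := by
      rw [hN, hD, hP]; ring
    nlinarith [mul_nonneg hN0.le (by linarith : (0:ℝ) ≤ (E+a)^2 - E^2*(e2+1)^2),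
      mul_nonneg hD0.le (by linarith : (0:ℝ) ≤ E^2*(e1-1)^2 - (E-a)^2)]
  have hY2 : 0 < P + (E+a)^2 := by positivity
  have hY1 : (0:ℝ) ≤ d^2+(E+a)^2 := by positivity
  have step : ((d^2+(E-a)^2)*D) * (P+(E+a)^2) ≤ ((d^2+(E+a)^2)*N) * (P+(E+a)^2) := by
    calc ((d^2+(E-a)^2)*D) * (P+(E+a)^2)
        = ((d^2+(E-a)^2) * (P+(E+a)^2)) * D := by ring
      _ ≤ ((P+(E-a)^2) * (d^2+(E+a)^2)) * D := mul_le_mul_of_nonneg_right s1 hD0.le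
      _ = ((P+(E-a)^2) * D) * (d^2+(E+a)^2) := by ring
      _ ≤ ((P+(E+a)^2) * N) * (d^2+(E+a)^2) := mul_le_mul_of_nonneg_right s2 hY1
      _ = ((d^2+(E+a)^2)*N) * (P+(E+a)^2) := by ring
  exact le_of_mul_le_mul_right step hY2

private lemma log_step (A B r : ℝ) (hA0 : 0 ≤ A) (hAB : A < B)
    (hkey : A ≤ B * r) (hrlt1 : r < 1) :
    Real.log ((B + A) / (B - A)) ≤ Real.log ((1 + r) / (1 - r)) := by
  have hB0 : 0 < B := lt_of_le_of_lt hA0 hAB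
  have hr0 : 0 ≤ B * r := le_trans hA0 hkey
  apply Real.log_le_log
  · exact div_pos (by linarith) (by linarith)
  · rw [div_le_div_iff₀ (by linarith) (by linarith)]
    nlinarith

set_option maxHeartbeats 1000000 in
/-- the set `X = {(eⁿm, eⁿ) : n, m ∈ ℤ}` is coarsely dense in the
hyperbolic plane: every point is within hyperbolic distance
`2 tanh⁻¹ √((1/4 + (e^{1/2}−1)²)/(1/4 + (e^{−1/2}+1)²))` of `X`
(here `2 tanh⁻¹ t = log((1+t)/(1−t))`). -/
theorem lattice_coarsely_dense_in_hyperbolic_plane :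
    ∀ y : ℂ, 0 < y.im → ∃ n m : ℤ,
      hypDist (latticePt n m) y ≤
        Real.log ((1 + Real.sqrt ((1/4 + (Real.exp (1/2) - 1)^2) /
                                  (1/4 + (Real.exp (-(1/2)) + 1)^2))) /
                  (1 - Real.sqrt ((1/4 + (Real.exp (1/2) - 1)^2) /
                                  (1/4 + (Real.exp (-(1/2)) + 1)^2)))) := by
  intro y hy
  set a := y.im with ha
  set u := y.re with hu
  set n : ℤ := round (Real.log a) with hn
  set E := Real.exp (n : ℝ) with hE
  have hE0 : 0 < E := Real.exp_pos _
  set m : ℤ := round (u / E) with hm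
  refine ⟨n, m, ?_⟩
  set d := E * (m : ℝ) - u with hd
  -- |d| ≤ E/2
  have hdle : |d| ≤ E / 2 := by
    have h1 : |u / E - (m : ℝ)| ≤ 1 / 2 := abs_sub_round _
    have h2 : d = E * ((m : ℝ) - u / E) := by field_simp [hd]; ring
    rw [h2, abs_mul, abs_of_pos hE0, abs_sub_comm]
    calc E * |u / E - (m : ℝ)| ≤ E * (1/2) :=
          mul_le_mul_of_nonneg_left h1 hE0.le
      _ = E / 2 := by ring
  -- bounds on a
  have hlog : |Real.log a - (n : ℝ)| ≤ 1 / 2 := abs_sub_round _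
  have haE1 : a ≤ E * Real.exp (1/2) := by
    have h : a = Real.exp (Real.log a) := (Real.exp_log hy).symm
    rw [h, hE, ← Real.exp_add]
    apply Real.exp_le_exp.2
    have := abs_le.1 hlog
    linarith [this.2]
  have haE2 : E * Real.exp (-(1/2)) ≤ a := by
    have h : a = Real.exp (Real.log a) := (Real.exp_log hy).symm
    rw [h, hE, ← Real.exp_add]
    apply Real.exp_le_exp.2
    have := abs_le.1 hlog
    linarith [this.1]
  -- compute the two abs values
  have hreim1 : latticePt n m - (starRingEnd ℂ) y = Complex.mk d (E + a) := by
    apply Complex.ext <;>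
      simp only [latticePt, hE, Complex.sub_re, Complex.sub_im, Complex.add_re, Complex.add_im,
        Complex.mul_re, Complex.mul_im, Complex.I_re, Complex.I_im, Complex.ofReal_re,
        Complex.ofReal_im, Complex.conj_re, Complex.conj_im, hd, ha, hu] <;> ring
  have hreim2 : latticePt n m - y = Complex.mk d (E - a) := by
    apply Complex.ext <;>
      simp only [latticePt, hE, Complex.sub_re, Complex.sub_im, Complex.add_re, Complex.add_im,
        Complex.mul_re, Complex.mul_im, Complex.I_re, Complex.I_im, Complex.ofReal_re,
        Complex.ofReal_im, hd, ha, hu] <;> ring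
  set A := Real.sqrt (d^2 + (E - a)^2) with hA
  set B := Real.sqrt (d^2 + (E + a)^2) with hB
  have habs1 : ‖latticePt n m - (starRingEnd ℂ) y‖ = B := by
    rw [hreim1, Complex.norm_def, Complex.normSq_mk, hB]
    congr 1; ring
  have habs2 : ‖latticePt n m - y‖ = A := by
    rw [hreim2, Complex.norm_def, Complex.normSq_mk, hA]
    congr 1; ring
  unfold hypDist
  rw [habs1, habs2]
  -- from now on, everything is opaque real arithmetic
  clear_value A B d m E n u a
  clear hreim1 hreim2 habs1 habs2 hlog hd hm hn ha hu hE
  have hd2 : d ^ 2 ≤ E ^ 2 / 4 := by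
    have h1 : d^2 ≤ (E/2)^2 := by
      rw [← sq_abs d]
      exact pow_le_pow_left₀ (abs_nonneg d) hdle 2
    calc d^2 ≤ (E/2)^2 := h1
      _ = E^2/4 := by ring
  set e1 := Real.exp (1/2 : ℝ) with he1
  set e2 := Real.exp (-(1/2) : ℝ) with he2
  have he1pos : 0 < e1 := Real.exp_pos _
  have he2pos : 0 < e2 := Real.exp_pos _
  have hprod : e1 * e2 = 1 := by
    rw [he1, he2, ← Real.exp_add]; norm_num
  have he1gt : 1 < e1 := by
    rw [he1]; exact Real.one_lt_exp_iff.mpr (by norm_num)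
  have he2lt : e2 < 1 := by nlinarith
  have he1lt2 : e1 < 2 := by
    have h4 : e1 ^ 2 < 2 ^ 2 := by
      have h5 : e1 ^ 2 = Real.exp 1 := by rw [he1, sq, ← Real.exp_add]; norm_num
      rw [h5]
      calc Real.exp 1 < 2.7182818286 := Real.exp_one_lt_d9
        _ ≤ 2 ^ 2 := by norm_num
    exact lt_of_pow_lt_pow_left₀ 2 (by norm_num) h4
  have hsum : 2 ≤ e1 + e2 := by nlinarith [sq_nonneg (e1 - 1)]
  clear_value e1 e2
  clear he1 he2
  set N := 1/4 + (e1 - 1)^2 with hN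
  set D := 1/4 + (e2 + 1)^2 with hD
  have hN0 : 0 < N := by positivity
  have hD0 : 0 < D := by positivity
  have hND : N < D := by
    have h1 : e1 - 1 < e2 + 1 := by nlinarith
    have h2 : (e1-1)^2 < (e2+1)^2 := by nlinarith
    rw [hN, hD]; linarith
  set C := N / D with hC
  have hC0 : 0 ≤ C := by positivity
  have hClt1 : C < 1 := (div_lt_one hD0).2 hND
  set r := Real.sqrt C with hr
  have hr0 : 0 ≤ r := Real.sqrt_nonneg _
  have hrlt1 : r < 1 := by
    rw [hr]
    calc Real.sqrt C < Real.sqrt 1 := Real.sqrt_lt_sqrt hC0 hClt1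
      _ = 1 := Real.sqrt_one
  have hr2 : r ^ 2 = C := Real.sq_sqrt hC0
  have hA0 : 0 ≤ A := hA ▸ Real.sqrt_nonneg _
  have hB2 : B ^ 2 = d^2 + (E + a)^2 := by rw [hB]; exact Real.sq_sqrt (by positivity)
  have hA2 : A ^ 2 = d^2 + (E - a)^2 := by rw [hA]; exact Real.sq_sqrt (by positivity)
  have hAB : A < B := by
    rw [hA, hB]
    apply Real.sqrt_lt_sqrt (by positivity)
    nlinarith [mul_pos hE0 hy]
  have hB0 : 0 < B := lt_of_le_of_lt hA0 hAB
  -- main inequality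
  have hfin : (d^2 + (E-a)^2) * D ≤ (d^2 + (E+a)^2) * N := by
    rw [hN, hD]
    exact key_ineq E a d e1 e2 hE0 hy hd2 haE1 haE2 he2pos hsum
  have hkeysq : A ^ 2 ≤ (B * r) ^ 2 := by
    rw [hA2, mul_pow, hB2, hr2, hC, ← mul_div_assoc, le_div_iff₀ hD0]
    exact hfin
  have hkey : A ≤ B * r := by
    have h := Real.sqrt_le_sqrt hkeysq
    rwa [Real.sqrt_sq hA0, Real.sqrt_sq (mul_nonneg hB0.le hr0)] at h
  exact log_step A B r hA0 hAB hkey hrlt1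
end

section
/- In the hyperbolic plane H² with metric d(x,y) = log((|x−ȳ|+|x−y|)/(|x−ȳ|−|x−y|)), if x = (eⁿm, eⁿ) with n, m ∈ ℤ and y = (u,a) with a > 0 satisfy d(x,y) ≤ R, then |n − log a| ≤ R and |m − e^{−k}a⁻¹u| ≤ √(2(e^{2R} − 1)) where k = n − log a. Consequently, for every R > 0 there is a uniform bound M, independent of y, on the number of points x ∈ X = {(eⁿm, eⁿ) : n,m ∈ ℤ} with d(x,y) ≤ R; i.e., X is a quasi-lattice in H². -/
set_option maxHeartbeats 1000000


lemma key_bounds (n m : ℤ) (u a R : ℝ) (ha : 0 < a) (hR : 0 ≤ R)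
    (h : hypDist (latticePt n m) ((u : ℂ) + (a : ℂ) * Complex.I) ≤ R) :
    |(n : ℝ) - Real.log a| ≤ R ∧
    |(m : ℝ) - Real.exp (-((n : ℝ) - Real.log a)) * a⁻¹ * u| ≤
      Real.sqrt (2 * (Real.exp (2 * R) - 1)) := by
  unfold hypDist at h
  set e : ℝ := Real.exp (n : ℝ) with he_def
  have he : 0 < e := Real.exp_pos _
  set x : ℂ := latticePt n m with hx
  set y : ℂ := (u : ℂ) + (a : ℂ) * Complex.I with hy
  set p : ℝ := ‖x - (starRingEnd ℂ) y‖ with hp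
  set q : ℝ := ‖x - y‖ with hq
  have hre1 : (x - (starRingEnd ℂ) y).re = e * m - u := by
    simp [hx, hy, latticePt, Complex.sub_re, Complex.add_re, Complex.mul_re,
      -Complex.ofReal_exp, he_def]
  have him1 : (x - (starRingEnd ℂ) y).im = e + a := by
    simp [hx, hy, latticePt, Complex.sub_im, Complex.add_im, Complex.mul_im,
      -Complex.ofReal_exp, he_def]
  have hre2 : (x - y).re = e * m - u := by
    simp [hx, hy, latticePt, Complex.sub_re, Complex.add_re, Complex.mul_re,
      -Complex.ofReal_exp, he_def]
  have him2 : (x - y).im = e - a := by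
    simp [hx, hy, latticePt, Complex.sub_im, Complex.add_im, Complex.mul_im,
      -Complex.ofReal_exp, he_def]
  have hp2 : p ^ 2 = (e * m - u) ^ 2 + (e + a) ^ 2 := by
    rw [hp, Complex.sq_norm, Complex.normSq_apply, hre1, him1]; ring
  have hq2 : q ^ 2 = (e * m - u) ^ 2 + (e - a) ^ 2 := by
    rw [hq, Complex.sq_norm, Complex.normSq_apply, hre2, him2]; ring
  have hpq : q ^ 2 + 4 * e * a = p ^ 2 := by rw [hp2, hq2]; ring
  clear_value x y e
  have hq0 : 0 ≤ q := norm_nonneg _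
  have hp0 : 0 ≤ p := norm_nonneg _
  have hqp : q < p := by nlinarith [mul_pos he ha]
  have hden : 0 < p - q := by linarith
  set t : ℝ := (p + q) / (p - q) with ht_def
  have ht1 : (1 : ℝ) ≤ t := by rw [ht_def, le_div_iff₀ hden]; linarith
  have ht0 : 0 < t := by linarith
  have htR : t ≤ Real.exp R := by
    calc t = Real.exp (Real.log t) := (Real.exp_log ht0).symm
    _ ≤ Real.exp R := Real.exp_le_exp.mpr h
  have hqt : q ^ 2 * t = e * a * (t - 1) ^ 2 := by
    rw [ht_def]
    field_simp
    linear_combination (-(q ^ 2)) * hpq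
  clear_value p q t
  set E : ℝ := Real.exp R with hE_def
  have hE1 : (1 : ℝ) ≤ E := Real.one_le_exp hR
  clear_value E
  set E' : ℝ := Real.exp (-R) with hE'_def
  have hE'0 : 0 < E' := Real.exp_pos _
  clear_value E'
  have hEE' : E * E' = 1 := by rw [hE_def, hE'_def, ← Real.exp_add]; simp
  have hE'1 : E' ≤ 1 := by
    rw [hE'_def]; exact Real.exp_le_one_iff.mpr (by linarith)
  have hEE2 : (0 : ℝ) ≤ E + E' - 2 := by nlinarith
  have h1 : (t - 1) ^ 2 ≤ t * (E + E' - 2) := by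
    have hEt : 0 ≤ (E - t) * (t - E') := mul_nonneg (by linarith) (by linarith)
    nlinarith [hEt, hEE']
  have hmain : q ^ 2 ≤ e * a * (E + E' - 2) := by
    have h2 : q ^ 2 * t ≤ (e * a * (E + E' - 2)) * t := by
      calc q ^ 2 * t = e * a * (t - 1) ^ 2 := hqt
      _ ≤ e * a * (t * (E + E' - 2)) :=
        mul_le_mul_of_nonneg_left h1 (by positivity)
      _ = (e * a * (E + E' - 2)) * t := by ring
    exact le_of_mul_le_mul_right h2 ht0
  set k : ℝ := (n : ℝ) - Real.log a with hk_def
  clear_value k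
  set K : ℝ := Real.exp k with hK_def
  have hK0 : 0 < K := Real.exp_pos _
  clear_value K
  have heK : e = a * K := by
    rw [he_def, hK_def, hk_def, Real.exp_sub, Real.exp_log ha]
    field_simp
  have hK' : Real.exp (-k) = K⁻¹ := by rw [Real.exp_neg, hK_def]
  clear h hre1 him1 hre2 him2 hp2 hx hy hp hq ht_def ht1 htR hqt h1
  have hcosh' : K ^ 2 + 1 ≤ K * (E + E') := by
    have h1' : (e - a) ^ 2 ≤ e * a * (E + E' - 2) := by
      linarith [sq_nonneg (e * (m : ℝ) - u), hq2, hmain]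
    rw [heK] at h1'
    have h2 : a ^ 2 * (K ^ 2 + 1) ≤ a ^ 2 * (K * (E + E')) := by nlinarith [h1']
    exact le_of_mul_le_mul_left h2 (by positivity)
  have hcosh : K + K⁻¹ ≤ E + E' := by
    rw [← mul_le_mul_iff_of_pos_right hK0]
    have hid : (K + K⁻¹) * K = K ^ 2 + 1 := by field_simp
    rw [hid]; linarith [hcosh']
  have habs : |k| ≤ R := by
    have hc : Real.cosh k ≤ Real.cosh R := by
      rw [Real.cosh_eq, Real.cosh_eq, ← hK_def, ← hE_def, ← hE'_def, hK']
      linarith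
    have := Real.cosh_le_cosh.mp hc
    rwa [abs_of_nonneg hR] at this
  refine ⟨habs, ?_⟩
  have hKinv : K⁻¹ ≤ E := by
    rw [← hK', hE_def]
    exact Real.exp_le_exp.mpr (by linarith [neg_abs_le k, abs_le.mp habs])
  have hek : Real.exp (-k) * a⁻¹ = e⁻¹ := by
    rw [hK', heK, mul_inv]
    exact mul_comm _ _
  have heq : (m : ℝ) - Real.exp (-k) * a⁻¹ * u = (e * m - u) / e := by
    rw [hek]; field_simp
  have hC : K⁻¹ * (E + E' - 2) ≤ 2 * (E * E - 1) := by
    linarith [mul_nonneg (sub_nonneg.2 hKinv) hEE2, hEE',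
      mul_nonneg (by linarith : (0:ℝ) ≤ E - 1) (by linarith : (0:ℝ) ≤ E + 3)]
  have hexp2 : Real.exp (2 * R) = E * E := by
    rw [two_mul, Real.exp_add, hE_def]
  have hw : ((m : ℝ) - Real.exp (-k) * a⁻¹ * u) ^ 2 ≤ 2 * (Real.exp (2 * R) - 1) := by
    rw [heq, hexp2, div_pow, div_le_iff₀ (by positivity)]
    have hw2 : (e * (m : ℝ) - u) ^ 2 ≤ e * a * (E + E' - 2) := by
      linarith [sq_nonneg (e - a), hq2, hmain]
    have hae : e * a = e ^ 2 * K⁻¹ := by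
      rw [heK]; field_simp
    rw [hae] at hw2
    calc (e * (m : ℝ) - u) ^ 2 ≤ e ^ 2 * K⁻¹ * (E + E' - 2) := hw2
    _ = e ^ 2 * (K⁻¹ * (E + E' - 2)) := by ring
    _ ≤ e ^ 2 * (2 * (E * E - 1)) := by
        apply mul_le_mul_of_nonneg_left hC (by positivity)
    _ = 2 * (E * E - 1) * e ^ 2 := by ring
  exact Real.abs_le_sqrt hw

lemma card_Icc_le (x B : ℝ) : (Finset.Icc ⌈x - B⌉ ⌊x + B⌋).card ≤ ⌈2 * B⌉₊ + 1 := by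
  rw [Int.card_Icc]
  apply Int.toNat_le.mpr
  have h : ((⌊x + B⌋ + 1 - ⌈x - B⌉ : ℤ) : ℝ) ≤ ((⌈2 * B⌉₊ + 1 : ℕ) : ℝ) := by
    push_cast
    linarith [Int.floor_le (x + B), Int.le_ceil (x - B), Nat.le_ceil (2 * B)]
  exact_mod_cast h

lemma quasi_lattice_count (R : ℝ) (hR : 0 < R) : ∀ y : ℂ, 0 < y.im →
    {p : ℤ × ℤ | hypDist (latticePt p.1 p.2) y ≤ R}.Finite ∧
    {p : ℤ × ℤ | hypDist (latticePt p.1 p.2) y ≤ R}.ncard ≤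
      (⌈2 * R⌉₊ + 1) * (⌈2 * Real.sqrt (2 * (Real.exp (2 * R) - 1))⌉₊ + 1) := by
  set B : ℝ := Real.sqrt (2 * (Real.exp (2 * R) - 1)) with hB_def
  intro y hy
  set a : ℝ := y.im with ha_def
  set u : ℝ := y.re with hu_def
  have hy' : y = (u : ℂ) + (a : ℂ) * Complex.I := (Complex.re_add_im y).symm
  set c : ℤ → ℝ := fun n => Real.exp (-((n : ℝ) - Real.log a)) * a⁻¹ * u with hc_def
  set F : Finset (ℤ × ℤ) := (Finset.Icc ⌈Real.log a - R⌉ ⌊Real.log a + R⌋).biUnion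
      (fun n => (Finset.Icc ⌈c n - B⌉ ⌊c n + B⌋).image (fun m => (n, m))) with hF_def
  have hsub : {p : ℤ × ℤ | hypDist (latticePt p.1 p.2) y ≤ R} ⊆ ↑F := by
    rintro ⟨n, m⟩ hp
    simp only [Set.mem_setOf_eq] at hp
    rw [hy'] at hp
    obtain ⟨h1, h2⟩ := key_bounds n m u a R hy hR.le hp
    obtain ⟨h1a, h1b⟩ := abs_le.mp h1
    obtain ⟨h2a, h2b⟩ := abs_le.mp h2
    rw [Finset.mem_coe, hF_def, Finset.mem_biUnion]
    refine ⟨n, ?_, ?_⟩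
    · rw [Finset.mem_Icc]
      exact ⟨Int.ceil_le.mpr (by linarith), Int.le_floor.mpr (by linarith)⟩
    · rw [Finset.mem_image]
      refine ⟨m, ?_, rfl⟩
      rw [Finset.mem_Icc]
      exact ⟨Int.ceil_le.mpr (by simp only [hc_def]; linarith),
        Int.le_floor.mpr (by simp only [hc_def]; linarith)⟩
  refine ⟨Set.Finite.subset F.finite_toSet hsub, ?_⟩
  have h1 := Set.ncard_le_ncard hsub F.finite_toSet
  rw [Set.ncard_coe_finset] at h1
  refine h1.trans ?_
  calc F.card ≤ ∑ n ∈ Finset.Icc ⌈Real.log a - R⌉ ⌊Real.log a + R⌋,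
      ((Finset.Icc ⌈c n - B⌉ ⌊c n + B⌋).image (fun m => (n, m))).card :=
    Finset.card_biUnion_le
  _ ≤ (Finset.Icc ⌈Real.log a - R⌉ ⌊Real.log a + R⌋).card • (⌈2 * B⌉₊ + 1) :=
    Finset.sum_le_card_nsmul _ _ _ (fun n _ =>
      le_trans (Finset.card_image_le) (card_Icc_le (c n) B))
  _ = (Finset.Icc ⌈Real.log a - R⌉ ⌊Real.log a + R⌋).card * (⌈2 * B⌉₊ + 1) :=
    by rw [smul_eq_mul]
  _ ≤ (⌈2 * R⌉₊ + 1) * (⌈2 * B⌉₊ + 1) :=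
    Nat.mul_le_mul_right _ (card_Icc_le (Real.log a) R)

/-- points of `X = {(eⁿm, eⁿ)}` within hyperbolic distance `R` of a
fixed point `(u,a)` satisfy `|n − log a| ≤ R` and
`|m − e^{−k} a⁻¹ u| ≤ √(2(e^{2R}−1))` where `k = n − log a`; consequently `X` is a
quasi-lattice in the hyperbolic plane. -/
theorem lattice_is_quasi_lattice_in_hyperbolic_plane :
    (∀ (n m : ℤ) (u a R : ℝ), 0 < a → 0 ≤ R →
      hypDist (latticePt n m) ((u : ℂ) + (a : ℂ) * Complex.I) ≤ R →
      |(n : ℝ) - Real.log a| ≤ R ∧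
      |(m : ℝ) - Real.exp (-((n : ℝ) - Real.log a)) * a⁻¹ * u| ≤
        Real.sqrt (2 * (Real.exp (2 * R) - 1))) ∧
    (∀ R : ℝ, 0 < R → ∃ M : ℕ, ∀ y : ℂ, 0 < y.im →
      {p : ℤ × ℤ | hypDist (latticePt p.1 p.2) y ≤ R}.Finite ∧
      {p : ℤ × ℤ | hypDist (latticePt p.1 p.2) y ≤ R}.ncard ≤ M) := by
  constructor
  · exact fun n m u a R ha hR h => key_bounds n m u a R ha hR h
  · intro R hR
    exact ⟨_, quasi_lattice_count R hR⟩
end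

section
/- Let G be a compactly generated locally compact group with Haar measure λ and compact symmetric generating neighbourhood K, with a rough Cayley graph X (a uniformly locally finite connected graph with a proper cobounded quasi-action of G). Then there exist constants a, b > 0 and positive integers C, r such that for every positive integer m: λ(Kᵐ) ≤ a·|N_{Cm+r}(x₀)| and |N_m(x₀)| ≤ b·λ(K^{C(m+2r)+1}), where N_m(x₀) is the ball of radius m around a fixed vertex x₀ in the graph metric. Consequently G and X have the same type of growth (polynomial, intermediate, or exponential). -/
open Pointwise MeasureTheory

/-- Quasi-isometric-embedding bounds with respect to arbitrary distance functions. -/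
def QIEmb {α β : Type*} (d₁ : α → α → ℝ) (d₂ : β → β → ℝ) (C r : ℝ) (f : α → β) : Prop :=
  ∀ x y : α, C⁻¹ * d₁ x y - r ≤ d₂ (f x) (f y) ∧ d₂ (f x) (f y) ≤ C * d₁ x y + r

/-- The graph metric of a graph, as a real-valued distance. -/
noncomputable def grDist {V : Type*} (Gr : SimpleGraph V) (u v : V) : ℝ := (Gr.dist u v : ℝ)

/-- `X` (the vertex set of `Gr`) is a rough Cayley graph of `G` via the quasi-action
`act` with constants `C₁, r₁`: `Gr` is a uniformly locally finite connected graph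
and `act` is a proper cobounded `(C₁,r₁)`-quasi-action of `G` on it. -/
def IsRoughCayleyGraph {G V : Type*} [Group G] [TopologicalSpace G]
    (Gr : SimpleGraph V) (act : G → V → V) (C₁ r₁ : ℝ) : Prop :=
  Gr.Connected ∧
  (∃ M : ℕ, ∀ v : V, (Gr.neighborSet v).Finite ∧ (Gr.neighborSet v).ncard ≤ M) ∧
  (∀ s : G, QIEmb (grDist Gr) (grDist Gr) C₁ r₁ (act s) ∧
    ∀ y : V, ∃ x : V, grDist Gr (act s x) y ≤ r₁) ∧
  (∀ x : V, grDist Gr (act 1 x) x ≤ r₁) ∧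
  (∀ (s t : G) (x : V), grDist Gr (act s (act t x)) (act (s * t) x) ≤ r₁) ∧
  (∀ L : Set G, IsCompact L → ∀ x : V, ∃ R : ℝ, ∀ s ∈ L, grDist Gr (act s x) x ≤ R) ∧
  (∀ R : ℝ, ∀ x : V, IsCompact (closure {s : G | grDist Gr (act s x) x ≤ R})) ∧
  (∀ x y : V, ∃ s : G, grDist Gr (act s x) y ≤ r₁)

/-- Auxiliary: a compact set is absorbed by powers of the generating set. -/
lemma aux_absorb {G : Type*} [Group G] [TopologicalSpace G] [IsTopologicalGroup G]
    (K : Set G) (hKnhds : K ∈ nhds (1:G)) (hKgen : ∀ g : G, ∃ n : ℕ, g ∈ K ^ n)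
    (L : Set G) (hL : IsCompact L) : ∃ n : ℕ, 1 ≤ n ∧ L ⊆ K ^ n := by
  have h1K : (1:G) ∈ K := mem_of_mem_nhds hKnhds
  have h1int : (1:G) ∈ interior K := mem_interior_iff_mem_nhds.2 hKnhds
  have hcover : L ⊆ ⋃ n : ℕ, K ^ n * interior K := by
    intro g hg
    obtain ⟨n, hn⟩ := hKgen g
    exact Set.mem_iUnion.2 ⟨n, g, hn, 1, h1int, mul_one g⟩
  obtain ⟨t, ht⟩ := hL.elim_finite_subcover (fun n : ℕ => K ^ n * interior K)
    (fun n => (isOpen_interior).mul_left) hcover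
  rcases t.eq_empty_or_nonempty with rfl | hne
  · refine ⟨1, le_rfl, fun g hg => absurd (ht hg) (by simp)⟩
  obtain ⟨N, hN, hmax⟩ := t.exists_max_image id hne
  refine ⟨N + 1, le_add_self, fun g hg => ?_⟩
  have hmem := ht hg
  simp only [Set.mem_iUnion] at hmem
  obtain ⟨n, hn, hgn⟩ := hmem
  obtain ⟨x, hx, y, hy, rfl⟩ := hgn
  have : x ∈ K ^ N := Set.pow_subset_pow_right h1K (hmax n hn) hx
  rw [pow_succ]
  exact Set.mul_mem_mul this (interior_subset hy)

/-- Auxiliary: balls in a uniformly locally finite connected graph are contained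
in finsets of controlled size. -/
lemma aux_ball {V : Type*} (Gr : SimpleGraph V) (hconn : Gr.Connected) (M : ℕ)
    (hM : ∀ v : V, (Gr.neighborSet v).Finite ∧ (Gr.neighborSet v).ncard ≤ M) :
    ∀ (n : ℕ) (c : V), ∃ F : Finset V,
      (∀ v : V, Gr.dist c v ≤ n → v ∈ F) ∧ F.card ≤ (M+1)^n := by
  classical
  intro n
  induction n with
  | zero =>
    intro c
    refine ⟨{c}, fun v hv => ?_, by simp⟩
    have : Gr.dist c v = 0 := Nat.le_zero.1 hv
    simp [(hconn.dist_eq_zero_iff).1 this]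
  | succ n ih =>
    intro c
    obtain ⟨F, hF, hFcard⟩ := ih c
    refine ⟨F.biUnion (fun u => insert u (hM u).1.toFinset), fun v hv => ?_, ?_⟩
    · by_cases hle : Gr.dist c v ≤ n
      · exact Finset.mem_biUnion.2 ⟨v, hF v hle, Finset.mem_insert_self _ _⟩
      · have hdist : Gr.dist c v = n + 1 := le_antisymm hv (not_le.1 hle)
        have hvc : v ≠ c := by
          intro h; subst h; simp [SimpleGraph.dist_self] at hdist
        obtain ⟨p, hp⟩ := hconn.exists_walk_length_eq_dist c v
        have hq : (p.reverse).length = n + 1 := by rw [SimpleGraph.Walk.length_reverse, hp, hdist]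
        obtain ⟨w, h, q, heq⟩ := SimpleGraph.Walk.exists_eq_cons_of_ne hvc p.reverse
        rw [heq] at hq
        have hqlen : q.length = n := by simpa using hq
        have hw : Gr.dist c w ≤ n := by
          calc Gr.dist c w ≤ q.reverse.length := SimpleGraph.dist_le _
          _ = n := by rw [SimpleGraph.Walk.length_reverse, hqlen]
        refine Finset.mem_biUnion.2 ⟨w, hF w hw, Finset.mem_insert_of_mem ?_⟩
        rw [Set.Finite.mem_toFinset]
        exact h.symm
    · calc (F.biUnion _).card ≤ ∑ u ∈ F, (insert u (hM u).1.toFinset).card :=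
          Finset.card_biUnion_le
      _ ≤ ∑ u ∈ F, (M + 1) := by
          refine Finset.sum_le_sum fun u _ => ?_
          calc (insert u (hM u).1.toFinset).card ≤ (hM u).1.toFinset.card + 1 :=
            Finset.card_insert_le _ _
          _ ≤ M + 1 := by
              have := (hM u).2
              rw [Set.ncard_eq_toFinset_card _ (hM u).1] at this
              omega
      _ = F.card * (M+1) := by rw [Finset.sum_const, smul_eq_mul]
      _ ≤ (M+1)^n * (M+1) := Nat.mul_le_mul_right _ hFcard
      _ = (M+1)^(n+1) := (pow_succ _ _).symm


/-- Auxiliary chain lemma: an element moving `y` close to `v` is a product of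
`length + 1` elements each moving `y` a bounded distance. -/
lemma aux_chain {G V : Type*} [Group G] [TopologicalSpace G]
    (Gr : SimpleGraph V) (act : G → V → V) (C₁ r₁ : ℝ) (hC₁ : 1 ≤ C₁) (hr₁ : 0 ≤ r₁)
    (hconn : Gr.Connected)
    (hQIup : ∀ (s : G) (x y : V), grDist Gr (act s x) (act s y) ≤ C₁ * grDist Gr x y + r₁)
    (hone : ∀ x : V, grDist Gr (act 1 x) x ≤ r₁)
    (hcompat : ∀ (s t : G) (x : V), grDist Gr (act s (act t x)) (act (s * t) x) ≤ r₁)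
    (hcobdd : ∀ x y : V, ∃ s : G, grDist Gr (act s x) y ≤ r₁) :
    ∀ (y v : V) (q : Gr.Walk v y) (s : G), grDist Gr (act s y) v ≤ r₁ →
      s ∈ (closure {g : G | grDist Gr (act g y) y ≤ C₁ * (2 * r₁ + 1) + 4 * r₁}) ^
        (q.length + 1) := by
  have hC₁0 : 0 < C₁ := lt_of_lt_of_le one_pos hC₁
  have tri : ∀ u v w : V, grDist Gr u w ≤ grDist Gr u v + grDist Gr v w := by
    intro u v w
    have := hconn.dist_triangle (u := u) (v := v) (w := w)
    unfold grDist
    exact_mod_cast this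
  have gcomm : ∀ u v : V, grDist Gr u v = grDist Gr v u := by
    intro u v; unfold grDist; rw [SimpleGraph.dist_comm]
  have hinvtriv : ∀ (t : G) (y : V), grDist Gr (act t⁻¹ (act t y)) y ≤ 2 * r₁ := by
    intro t y
    have h1 := hcompat t⁻¹ t y
    rw [inv_mul_cancel] at h1
    have h2 := hone y
    calc grDist Gr (act t⁻¹ (act t y)) y
        ≤ grDist Gr (act t⁻¹ (act t y)) (act 1 y) + grDist Gr (act 1 y) y := tri _ _ _
      _ ≤ r₁ + r₁ := add_le_add h1 h2
      _ = 2 * r₁ := by ring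
  intro y v q
  induction q with
  | nil =>
    intro s hs
    rw [SimpleGraph.Walk.length_nil, zero_add, pow_one]
    refine subset_closure ?_
    simp only [Set.mem_setOf_eq]
    nlinarith [hs, hr₁]
  | @cons u w y' h p ih =>
    intro s hs
    obtain ⟨t, ht⟩ := hcobdd y' w
    have htL := ih t ht
    have hdvw : grDist Gr u w ≤ 1 := by
      unfold grDist
      exact_mod_cast SimpleGraph.dist_le (SimpleGraph.Walk.cons h SimpleGraph.Walk.nil)
    have hkey : t⁻¹ * s ∈
        closure {g : G | grDist Gr (act g y') y' ≤ C₁ * (2 * r₁ + 1) + 4 * r₁} := by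
      refine subset_closure ?_
      simp only [Set.mem_setOf_eq]
      have d1 : grDist Gr (act (t⁻¹ * s) y') (act t⁻¹ (act s y')) ≤ r₁ := by
        rw [gcomm]; exact hcompat t⁻¹ s y'
      have d2 : grDist Gr (act t⁻¹ (act s y')) (act t⁻¹ (act t y')) ≤
          C₁ * grDist Gr (act s y') (act t y') + r₁ := hQIup t⁻¹ _ _
      have d3 : grDist Gr (act s y') (act t y') ≤ r₁ + 1 + r₁ := by
        have t1 := tri (act s y') u (act t y')
        have t2 := tri u w (act t y')
        have t3 : grDist Gr w (act t y') = grDist Gr (act t y') w := gcomm _ _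
        linarith
      have d4 : grDist Gr (act t⁻¹ (act t y')) y' ≤ 2 * r₁ := hinvtriv t y'
      have t4 := tri (act (t⁻¹ * s) y') (act t⁻¹ (act s y')) y'
      have t5 := tri (act t⁻¹ (act s y')) (act t⁻¹ (act t y')) y'
      have hC₁mul : C₁ * grDist Gr (act s y') (act t y') ≤ C₁ * (r₁ + 1 + r₁) :=
        mul_le_mul_of_nonneg_left d3 (le_of_lt hC₁0)
      nlinarith
    have hst : s = t * (t⁻¹ * s) := by group
    rw [hst, SimpleGraph.Walk.length_cons]
    have hmem := Set.mul_mem_mul htL hkey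
    rwa [← pow_succ] at hmem

/-- a compactly generated locally compact group and its rough Cayley
graph have the same growth: `λ(Kᵐ) ≤ a·|N_{Cm+r}(x₀)|` and
`|N_m(x₀)| ≤ b·λ(K^{C(m+2r)+1})`; in particular `G` has polynomial growth iff the
graph does. -/
theorem growth_of_group_equals_growth_of_rough_cayley_graph
    {G V : Type*} [Group G] [TopologicalSpace G] [IsTopologicalGroup G] [LocallyCompactSpace G]
    [MeasurableSpace G] [BorelSpace G]
    (μ : MeasureTheory.Measure G) [μ.IsHaarMeasure]
    (K : Set G) (hKcomp : IsCompact K) (hKnhds : K ∈ nhds (1 : G)) (hKsymm : K⁻¹ = K)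
    (hKgen : ∀ g : G, ∃ n : ℕ, g ∈ K ^ n)
    (Gr : SimpleGraph V) (act : G → V → V) (C₁ r₁ : ℝ) (hC₁ : 1 ≤ C₁) (hr₁ : 0 ≤ r₁)
    (hrcg : IsRoughCayleyGraph Gr act C₁ r₁) (x₀ : V) :
    (∃ (a b : ENNReal) (C r : ℕ), 0 < a ∧ a ≠ ⊤ ∧ 0 < b ∧ b ≠ ⊤ ∧ 1 ≤ C ∧ 1 ≤ r ∧
      ∀ m : ℕ, 0 < m →
        μ (K ^ m) ≤ a * ({v : V | Gr.dist x₀ v ≤ C * m + r}.ncard : ENNReal) ∧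
        ({v : V | Gr.dist x₀ v ≤ m}.ncard : ENNReal) ≤ b * μ (K ^ (C * (m + 2 * r) + 1))) ∧
    ((∃ (d : ℕ) (c : ENNReal), c ≠ ⊤ ∧ ∀ m : ℕ, 0 < m → μ (K ^ m) ≤ c * (m : ENNReal) ^ d) ↔
      (∃ (d c : ℕ), ∀ m : ℕ, 0 < m → {v : V | Gr.dist x₀ v ≤ m}.ncard ≤ c * m ^ d)) := by
  classical
  obtain ⟨hconn, ⟨M, hM⟩, hQI, hone, hcompat, hbdd, hproper, hcobdd⟩ := hrcg
  have h1K : (1:G) ∈ K := mem_of_mem_nhds hKnhds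
  have h1int : (1:G) ∈ interior K := mem_interior_iff_mem_nhds.2 hKnhds
  have tri : ∀ u v w : V, grDist Gr u w ≤ grDist Gr u v + grDist Gr v w := by
    intro u v w
    have := hconn.dist_triangle (u := u) (v := v) (w := w)
    unfold grDist
    exact_mod_cast this
  have gcomm : ∀ u v : V, grDist Gr u v = grDist Gr v u := by
    intro u v; unfold grDist; rw [SimpleGraph.dist_comm]
  have gnonneg : ∀ u v : V, 0 ≤ grDist Gr u v := fun u v => Nat.cast_nonneg _
  have hQIup : ∀ (s : G) (x y : V), grDist Gr (act s x) (act s y) ≤ C₁ * grDist Gr x y + r₁ :=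
    fun s x y => ((hQI s).1 x y).2
  -- act t⁻¹ roughly inverts act t
  have hinvtriv : ∀ t : G, grDist Gr (act t⁻¹ (act t x₀)) x₀ ≤ 2 * r₁ := by
    intro t
    have h1 := hcompat t⁻¹ t x₀
    rw [inv_mul_cancel] at h1
    have h2 := hone x₀
    calc grDist Gr (act t⁻¹ (act t x₀)) x₀
        ≤ grDist Gr (act t⁻¹ (act t x₀)) (act 1 x₀) + grDist Gr (act 1 x₀) x₀ := tri _ _ _
      _ ≤ r₁ + r₁ := add_le_add h1 h2
      _ = 2 * r₁ := by ring
  -- constants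
  obtain ⟨RK', hRK'⟩ := hbdd K hKcomp x₀
  set RK : ℝ := max RK' 0 with hRKdef
  have hRK : ∀ k ∈ K, grDist Gr (act k x₀) x₀ ≤ RK := fun k hk => (hRK' k hk).trans (le_max_left _ _)
  have hRK0 : 0 ≤ RK := le_max_right _ _
  obtain ⟨RKK', hRKK'⟩ := hbdd (K * K) (hKcomp.mul hKcomp) x₀
  set RKK : ℝ := max RKK' 0 with hRKKdef
  have hRKK : ∀ k ∈ K * K, grDist Gr (act k x₀) x₀ ≤ RKK :=
    fun k hk => (hRKK' k hk).trans (le_max_left _ _)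
  have hRKK0 : 0 ≤ RKK := le_max_right _ _
  set D₀ : ℝ := C₁ * RK + 2 * r₁ with hD₀def
  have hC₁0 : 0 < C₁ := lt_of_lt_of_le one_pos hC₁
  have hD₀0 : 0 ≤ D₀ := by nlinarith
  set R₀ : ℝ := C₁ * (2 * r₁ + 1) + 4 * r₁ with hR₀def
  have hr₁R₀ : r₁ ≤ R₀ := by nlinarith
  set Lset : Set G := closure {s : G | grDist Gr (act s x₀) x₀ ≤ R₀} with hLsetdef
  have h1L : (1:G) ∈ Lset := subset_closure (by
    simp only [Set.mem_setOf_eq]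
    exact (hone x₀).trans hr₁R₀)
  obtain ⟨N₀, hN₀1, hN₀⟩ := aux_absorb K hKnhds hKgen Lset (hproper R₀ x₀)
  set P : Set G := closure {s : G | grDist Gr (act s x₀) x₀ ≤ 3 * r₁} with hPdef
  have hPcomp : IsCompact P := hproper (3 * r₁) x₀
  set C : ℕ := max (⌈D₀⌉₊ + 1) N₀ with hCdef
  set r : ℕ := ⌈r₁⌉₊ + 1 with hrdef
  have hC1 : 1 ≤ C := le_trans (by omega) (le_max_left _ _)
  have hr1 : 1 ≤ r := by omega
  have hD₀C : D₀ ≤ (C : ℝ) := by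
    have h1 : D₀ ≤ (⌈D₀⌉₊ : ℝ) := Nat.le_ceil D₀
    have h2 : (⌈D₀⌉₊ : ℕ) ≤ C := le_trans (by omega) (le_max_left _ _)
    exact h1.trans (by exact_mod_cast h2)
  have hr₁r : r₁ ≤ (r : ℝ) := by
    have h1 : r₁ ≤ (⌈r₁⌉₊ : ℝ) := Nat.le_ceil r₁
    have : ((⌈r₁⌉₊ : ℕ) : ℝ) ≤ ((r : ℕ) : ℝ) := by exact_mod_cast (by omega : ⌈r₁⌉₊ ≤ r)
    linarith
  have hN₀C : N₀ ≤ C := le_max_right _ _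
  set U : Set G := interior K with hUdef
  -- orbit of K^m stays within distance m*D₀ + r₁
  have orbit : ∀ (m : ℕ) (g : G), g ∈ K ^ m → grDist Gr x₀ (act g x₀) ≤ m * D₀ + r₁ := by
    intro m
    induction m with
    | zero =>
      intro g hg
      rw [pow_zero, Set.mem_one] at hg
      subst hg
      rw [gcomm]
      simpa using hone x₀
    | succ n ih =>
      intro g hg
      rw [pow_succ] at hg
      obtain ⟨g', hg', k, hk, rfl⟩ := hg
      have h1 : grDist Gr x₀ (act (g' * k) x₀) ≤
          grDist Gr x₀ (act g' (act k x₀)) + r₁ := by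
        have := hcompat g' k x₀
        have := tri x₀ (act g' (act k x₀)) (act (g' * k) x₀)
        linarith
      have h2 : grDist Gr x₀ (act g' (act k x₀)) ≤
          grDist Gr x₀ (act g' x₀) + (C₁ * grDist Gr x₀ (act k x₀) + r₁) := by
        have := hQIup g' x₀ (act k x₀)
        have := tri x₀ (act g' x₀) (act g' (act k x₀))
        linarith
      have h3 : grDist Gr x₀ (act k x₀) ≤ RK := by rw [gcomm]; exact hRK k hk
      have h4 := ih g' hg'
      have h5 : C₁ * grDist Gr x₀ (act k x₀) ≤ C₁ * RK :=
        mul_le_mul_of_nonneg_left h3 (le_of_lt hC₁0)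
      push_cast
      push_cast at h4
      nlinarith
  have chain : ∀ (v : V) (q : Gr.Walk v x₀) (s : G),
      grDist Gr (act s x₀) v ≤ r₁ → s ∈ Lset ^ (q.length + 1) := by
    intro v q s hs
    have := aux_chain Gr act C₁ r₁ hC₁ hr₁ hconn hQIup hone hcompat hcobdd x₀ v q s hs
    rwa [hLsetdef, hR₀def]
  -- selection of group elements moving x₀ near a given vertex
  set sel : V → G := fun v => (hcobdd x₀ v).choose with hseldef
  have hsel : ∀ v : V, grDist Gr (act (sel v) x₀) v ≤ r₁ := fun v => (hcobdd x₀ v).choose_spec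
  have selMem : ∀ (m : ℕ) (v : V), Gr.dist x₀ v ≤ m → sel v ∈ Lset ^ (m + 1) := by
    intro m v hv
    obtain ⟨p, hp⟩ := hconn.exists_walk_length_eq_dist v x₀
    have h1 : sel v ∈ Lset ^ (p.length + 1) := chain v p (sel v) (hsel v)
    have h2 : p.length + 1 ≤ m + 1 := by
      rw [hp, SimpleGraph.dist_comm]
      omega
    exact Set.pow_subset_pow_right h1L h2 h1
  -- first key inequality
  have key1 : ∀ m : ℕ, 0 < m →
      μ (K ^ m) ≤ (μ P + 1) * ({v : V | Gr.dist x₀ v ≤ C * m + r}.ncard : ENNReal) := by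
    intro m hm
    obtain ⟨F, hF, _⟩ := aux_ball Gr hconn M hM (C * m + r) x₀
    have hfin : {v : V | Gr.dist x₀ v ≤ C * m + r}.Finite :=
      Set.Finite.subset F.finite_toSet (fun v hv => hF v hv)
    set S : V → Set G := fun v => {g ∈ K ^ m | act g x₀ = v} with hSdef
    have hcover : K ^ m ⊆ ⋃ v ∈ hfin.toFinset, S v := by
      intro g hg
      have hdist : Gr.dist x₀ (act g x₀) ≤ C * m + r := by
        have h1 := orbit m g hg
        have h2 : (m : ℝ) * D₀ + r₁ ≤ ((C * m + r : ℕ) : ℝ) := by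
          have h3 : (m:ℝ) * D₀ ≤ (m:ℝ) * (C:ℝ) :=
            mul_le_mul_of_nonneg_left hD₀C (Nat.cast_nonneg m)
          have hr₁r' : r₁ ≤ (⌈r₁⌉₊ : ℝ) + 1 := by
            have := Nat.le_ceil r₁; linarith
          push_cast
          nlinarith [hr₁r', h3]
        have h4 : grDist Gr x₀ (act g x₀) ≤ ((C * m + r : ℕ) : ℝ) := h1.trans h2
        unfold grDist at h4
        exact_mod_cast h4
      have hvF : act g x₀ ∈ hfin.toFinset := by
        rw [Set.Finite.mem_toFinset]; exact hdist
      exact Set.mem_biUnion hvF ⟨hg, rfl⟩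
    have hSbound : ∀ v : V, μ (S v) ≤ μ P := by
      intro v
      rcases (S v).eq_empty_or_nonempty with he | ⟨g₀, hg₀⟩
      · simp [he]
      · obtain ⟨hg₀K, hg₀v⟩ := hg₀
        have hsub : S v ⊆ g₀ • P := by
          intro g hg
          have hgP : g₀⁻¹ * g ∈ P := by
            refine subset_closure ?_
            simp only [Set.mem_setOf_eq]
            have d1 : grDist Gr (act (g₀⁻¹ * g) x₀) (act g₀⁻¹ (act g x₀)) ≤ r₁ := by
              rw [gcomm]; exact hcompat g₀⁻¹ g x₀
            have heq : act g x₀ = act g₀ x₀ := by rw [hg.2, hg₀v]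
            have d2 : grDist Gr (act g₀⁻¹ (act g x₀)) x₀ ≤ 2 * r₁ := by
              rw [heq]; exact hinvtriv g₀
            have t1 := tri (act (g₀⁻¹ * g) x₀) (act g₀⁻¹ (act g x₀)) x₀
            linarith
          exact Set.mem_smul_set.2 ⟨g₀⁻¹ * g, hgP, by rw [smul_eq_mul, mul_inv_cancel_left]⟩
        calc μ (S v) ≤ μ (g₀ • P) := measure_mono hsub
        _ = μ P := MeasureTheory.measure_smul (μ := μ) g₀ P
    calc μ (K ^ m) ≤ μ (⋃ v ∈ hfin.toFinset, S v) := measure_mono hcover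
    _ ≤ ∑ v ∈ hfin.toFinset, μ (S v) := measure_biUnion_finset_le _ _
    _ ≤ ∑ _v ∈ hfin.toFinset, μ P := Finset.sum_le_sum (fun v _ => hSbound v)
    _ = (hfin.toFinset.card : ENNReal) * μ P := by rw [Finset.sum_const, nsmul_eq_mul]
    _ ≤ (μ P + 1) * (hfin.toFinset.card : ENNReal) := by
        rw [mul_comm]; exact mul_le_mul_left le_self_add _
    _ = (μ P + 1) * ({v : V | Gr.dist x₀ v ≤ C * m + r}.ncard : ENNReal) := by
        rw [Set.ncard_eq_toFinset_card _ hfin]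
  -- constants for the second inequality
  set n₂ : ℕ := ⌈4 * r₁ + C₁ * RKK⌉₊ with hn₂def
  set B : ℕ := (M + 1) ^ n₂ with hBdef
  have hU0 : μ U ≠ 0 := (isOpen_interior.measure_pos μ ⟨1, h1int⟩).ne'
  have hUtop : μ U ≠ ⊤ :=
    (lt_of_le_of_lt (measure_mono interior_subset) hKcomp.measure_lt_top).ne
  set b : ENNReal := (B : ENNReal) / μ U with hbdef
  -- second key inequality
  have key2 : ∀ m : ℕ, 0 < m →
      ({v : V | Gr.dist x₀ v ≤ m}.ncard : ENNReal) ≤ b * μ (K ^ (C * (m + 2 * r) + 1)) := by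
    intro m hm
    obtain ⟨F, hF, _⟩ := aux_ball Gr hconn M hM m x₀
    have hfin : {v : V | Gr.dist x₀ v ≤ m}.Finite :=
      Set.Finite.subset F.finite_toSet (fun v hv => hF v hv)
    set Fm : Finset V := hfin.toFinset with hFmdef
    set T : V → Set G := fun v => sel v • U with hTdef
    have hselK : ∀ v ∈ Fm, sel v ∈ K ^ (C * (m + 2 * r)) := by
      intro v hv
      rw [hFmdef, Set.Finite.mem_toFinset] at hv
      have h1 : sel v ∈ Lset ^ (m + 1) := selMem m v hv
      have h2 : Lset ^ (m + 1) ⊆ (K ^ N₀) ^ (m + 1) := Set.pow_subset_pow_left hN₀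
      rw [← pow_mul] at h2
      have h3 : N₀ * (m + 1) ≤ C * (m + 2 * r) := by
        have : m + 1 ≤ m + 2 * r := by omega
        calc N₀ * (m + 1) ≤ C * (m + 1) := Nat.mul_le_mul_right _ hN₀C
        _ ≤ C * (m + 2 * r) := Nat.mul_le_mul_left _ this
      exact Set.pow_subset_pow_right h1K h3 (h2 h1)
    have hTsub : ∀ v ∈ Fm, T v ⊆ K ^ (C * (m + 2 * r) + 1) := by
      intro v hv x hx
      obtain ⟨u, hu, rfl⟩ := Set.mem_smul_set.1 hx
      rw [smul_eq_mul, pow_succ]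
      exact Set.mul_mem_mul (hselK v hv) (interior_subset hu)
    -- overlapping translates have close indices
    have hoverlap : ∀ v w : V, ∀ x : G, x ∈ T v → x ∈ T w → Gr.dist v w ≤ n₂ := by
      intro v w x hxv hxw
      obtain ⟨u₁, hu₁, hx₁⟩ := Set.mem_smul_set.1 hxv
      obtain ⟨u₂, hu₂, hx₂⟩ := Set.mem_smul_set.1 hxw
      rw [smul_eq_mul] at hx₁ hx₂
      set g : G := (sel w)⁻¹ * sel v with hgdef
      have hgKK : g ∈ K * K := by
        have hg2 : g = u₂ * u₁⁻¹ := by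
          have h5 : sel v * u₁ = sel w * u₂ := by rw [hx₁, hx₂]
          calc g = (sel w)⁻¹ * (sel v * u₁) * u₁⁻¹ := by rw [hgdef]; group
          _ = (sel w)⁻¹ * (sel w * u₂) * u₁⁻¹ := by rw [h5]
          _ = u₂ * u₁⁻¹ := by group
        rw [hg2]
        refine Set.mul_mem_mul (interior_subset hu₂) ?_
        rw [← hKsymm]
        exact Set.inv_mem_inv.2 (interior_subset hu₁)
      have hρg : grDist Gr (act g x₀) x₀ ≤ RKK := hRKK g hgKK
      have d1 : grDist Gr (act (sel v) x₀) (act (sel w) (act g x₀)) ≤ r₁ := by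
        have h1 := hcompat (sel w) g x₀
        rw [hgdef, mul_inv_cancel_left] at h1
        rw [gcomm]
        exact h1
      have d2 : grDist Gr (act (sel w) (act g x₀)) (act (sel w) x₀) ≤ C₁ * RKK + r₁ := by
        have h1 := hQIup (sel w) (act g x₀) x₀
        have h2 : C₁ * grDist Gr (act g x₀) x₀ ≤ C₁ * RKK :=
          mul_le_mul_of_nonneg_left hρg (le_of_lt hC₁0)
        linarith
      have hreal : grDist Gr v w ≤ 4 * r₁ + C₁ * RKK := by
        have t1 := tri v (act (sel v) x₀) w
        have t2 := tri (act (sel v) x₀) (act (sel w) (act g x₀)) w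
        have t3 := tri (act (sel w) (act g x₀)) (act (sel w) x₀) w
        have e1 : grDist Gr v (act (sel v) x₀) = grDist Gr (act (sel v) x₀) v := gcomm _ _
        have e2 : grDist Gr (act (sel w) x₀) w ≤ r₁ := hsel w
        have e3 := hsel v
        linarith
      have : grDist Gr v w ≤ (n₂ : ℝ) := hreal.trans (Nat.le_ceil _)
      unfold grDist at this
      exact_mod_cast this
    -- bounded multiplicity of the translates
    have hmult : ∀ x : G, (Fm.filter (fun v => x ∈ T v)).card ≤ B := by
      intro x
      rcases (Fm.filter (fun v => x ∈ T v)).eq_empty_or_nonempty with he | ⟨v₀, hv₀⟩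
      · simp [he]
      · rw [Finset.mem_filter] at hv₀
        obtain ⟨F₂, hF₂, hF₂card⟩ := aux_ball Gr hconn M hM n₂ v₀
        have hsub : Fm.filter (fun v => x ∈ T v) ⊆ F₂ := by
          intro w hw
          rw [Finset.mem_filter] at hw
          exact hF₂ w (hoverlap v₀ w x hv₀.2 hw.2)
        exact (Finset.card_le_card hsub).trans hF₂card
    have hTmeas : ∀ v : V, MeasurableSet (T v) := fun v => (isOpen_interior.smul _).measurableSet
    have hμT : ∀ v : V, μ (T v) = μ U :=
      fun v => show μ (sel v • U) = μ U from MeasureTheory.measure_smul (μ := μ) (sel v) U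
    set W : Set G := MeasureTheory.toMeasurable μ (K ^ (C * (m + 2 * r) + 1)) with hWdef
    have hsum : (Fm.card : ENNReal) * μ U ≤ (B : ENNReal) * μ (K ^ (C * (m + 2 * r) + 1)) := by
      calc (Fm.card : ENNReal) * μ U = ∑ v ∈ Fm, μ (T v) := by
            simp [hμT, Finset.sum_const, nsmul_eq_mul]
      _ = ∑ v ∈ Fm, ∫⁻ x, (T v).indicator 1 x ∂μ := by
            refine Finset.sum_congr rfl fun v _ => ?_
            rw [MeasureTheory.lintegral_indicator_one (hTmeas v)]
      _ = ∫⁻ x, ∑ v ∈ Fm, (T v).indicator 1 x ∂μ :=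
            (MeasureTheory.lintegral_finset_sum _
              (fun v _ => (measurable_one.indicator (hTmeas v)))).symm
      _ ≤ ∫⁻ x, (B : ENNReal) * W.indicator 1 x ∂μ := by
            refine MeasureTheory.lintegral_mono fun x => ?_
            rcases em (∃ v ∈ Fm, x ∈ T v) with ⟨v₁, hv₁, hxv₁⟩ | hno
            · have hxW : x ∈ W := MeasureTheory.subset_toMeasurable _ _ (hTsub v₁ hv₁ hxv₁)
              have hle : ∑ v ∈ Fm, (T v).indicator 1 x ≤ (B : ENNReal) := by
                have : ∑ v ∈ Fm, (T v).indicator (1 : G → ENNReal) x =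
                    ((Fm.filter (fun v => x ∈ T v)).card : ENNReal) := by
                  rw [Finset.card_filter]
                  push_cast
                  refine Finset.sum_congr rfl fun v _ => ?_
                  by_cases hxv : x ∈ T v <;> simp [Set.indicator, hxv]
                rw [this]
                exact_mod_cast hmult x
              simpa [Set.indicator_of_mem hxW] using hle
            · have : ∀ v ∈ Fm, (T v).indicator (1 : G → ENNReal) x = 0 := by
                intro v hv
                have : x ∉ T v := fun hx => hno ⟨v, hv, hx⟩
                simp [Set.indicator_of_notMem this]
              rw [Finset.sum_eq_zero this]
              exact zero_le
      _ = (B : ENNReal) * μ W := by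
            rw [MeasureTheory.lintegral_const_mul _ (measurable_one.indicator
              (MeasureTheory.measurableSet_toMeasurable _ _)),
              MeasureTheory.lintegral_indicator_one
              (MeasureTheory.measurableSet_toMeasurable _ _)]
      _ = (B : ENNReal) * μ (K ^ (C * (m + 2 * r) + 1)) := by
            rw [hWdef, MeasureTheory.measure_toMeasurable]
    have hcard : ({v : V | Gr.dist x₀ v ≤ m}.ncard : ENNReal) = (Fm.card : ENNReal) := by
      rw [Set.ncard_eq_toFinset_card _ hfin]
    rw [hcard, hbdef]
    have h1 : (Fm.card : ENNReal) ≤ (B : ENNReal) * μ (K ^ (C * (m + 2 * r) + 1)) / μ U :=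
      (ENNReal.le_div_iff_mul_le (b := μ U)
        (c := (B : ENNReal) * μ (K ^ (C * (m + 2 * r) + 1))) (Or.inl hU0) (Or.inl hUtop)).2 hsum
    calc (Fm.card : ENNReal) ≤ (B : ENNReal) * μ (K ^ (C * (m + 2 * r) + 1)) / μ U := h1
    _ = (B : ENNReal) / μ U * μ (K ^ (C * (m + 2 * r) + 1)) := by
        rw [div_eq_mul_inv, div_eq_mul_inv]; ring
  have haP : (0:ENNReal) < μ P + 1 := lt_of_lt_of_le zero_lt_one le_add_self
  have haPtop : μ P + 1 ≠ ⊤ := ENNReal.add_ne_top.2 ⟨hPcomp.measure_lt_top.ne, ENNReal.one_ne_top⟩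
  have hB0 : (B : ENNReal) ≠ 0 := Nat.cast_ne_zero.2 (by positivity)
  have hb0 : (0:ENNReal) < b := ENNReal.div_pos hB0 hUtop
  have hbtop : b ≠ ⊤ := (ENNReal.div_lt_top (ENNReal.natCast_ne_top B) hU0).ne
  refine ⟨⟨μ P + 1, b, C, r, haP, haPtop, hb0, hbtop, hC1, hr1,
    fun m hm => ⟨key1 m hm, key2 m hm⟩⟩, ?_, ?_⟩
  · -- polynomial growth of the group implies polynomial growth of the graph
    rintro ⟨d, c, hctop, hpoly⟩
    set A : ℕ := C * (1 + 2 * r) + 1 with hAdef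
    have hEtop : b * c * ((A : ENNReal)) ^ d ≠ ⊤ :=
      ENNReal.mul_ne_top (ENNReal.mul_ne_top hbtop hctop)
        (ENNReal.pow_ne_top (ENNReal.natCast_ne_top A))
    obtain ⟨c', hc'⟩ := ENNReal.exists_nat_gt hEtop
    refine ⟨d, c', fun m hm => ?_⟩
    have h1 := key2 m hm
    have h2 : μ (K ^ (C * (m + 2 * r) + 1)) ≤
        c * ((C * (m + 2 * r) + 1 : ℕ) : ENNReal) ^ d := by
      have h := hpoly (C * (m + 2 * r) + 1) (by omega)
      exact_mod_cast h
    have h3 : C * (m + 2 * r) + 1 ≤ A * m := by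
      have h2r : 2 * C * r ≤ 2 * C * r * m := Nat.le_mul_of_pos_right _ hm
      have : A * m = C * m + 2 * C * r * m + m := by rw [hAdef]; ring
      rw [this]
      have : C * (m + 2 * r) = C * m + 2 * C * r := by ring
      rw [this]
      omega
    have h4 : ((C * (m + 2 * r) + 1 : ℕ) : ENNReal) ^ d ≤ ((A * m : ℕ) : ENNReal) ^ d :=
      pow_le_pow_left' (Nat.cast_le.2 h3) d
    have h5 : ((A * m : ℕ) : ENNReal) ^ d = (A : ENNReal) ^ d * (m : ENNReal) ^ d := by
      push_cast
      rw [mul_pow]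
    have h6 : ({v : V | Gr.dist x₀ v ≤ m}.ncard : ENNReal) ≤
        (c' : ENNReal) * (m : ENNReal) ^ d := by
      calc ({v : V | Gr.dist x₀ v ≤ m}.ncard : ENNReal)
          ≤ b * μ (K ^ (C * (m + 2 * r) + 1)) := h1
      _ ≤ b * (c * ((C * (m + 2 * r) + 1 : ℕ) : ENNReal) ^ d) := mul_le_mul_right h2 b
      _ ≤ b * (c * ((A * m : ℕ) : ENNReal) ^ d) :=
          mul_le_mul_right (mul_le_mul_right h4 c) b
      _ = (b * c * (A : ENNReal) ^ d) * (m : ENNReal) ^ d := by rw [h5]; ring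
      _ ≤ (c' : ENNReal) * (m : ENNReal) ^ d := mul_le_mul_left hc'.le _
    exact_mod_cast h6
  · -- polynomial growth of the graph implies polynomial growth of the group
    rintro ⟨d, c, hpoly⟩
    refine ⟨d, (μ P + 1) * c * ((C + r : ℕ) : ENNReal) ^ d,
      ENNReal.mul_ne_top (ENNReal.mul_ne_top haPtop (ENNReal.natCast_ne_top c))
        (ENNReal.pow_ne_top (ENNReal.natCast_ne_top _)), fun m hm => ?_⟩
    have h1 := key1 m hm
    have h2 : ({v : V | Gr.dist x₀ v ≤ C * m + r}.ncard : ENNReal) ≤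
        (c : ENNReal) * ((C * m + r : ℕ) : ENNReal) ^ d := by
      have h := hpoly (C * m + r) (by omega)
      exact_mod_cast h
    have h3 : C * m + r ≤ (C + r) * m := by
      have hr' : r ≤ r * m := Nat.le_mul_of_pos_right _ hm
      have : (C + r) * m = C * m + r * m := by ring
      omega
    have h4 : ((C * m + r : ℕ) : ENNReal) ^ d ≤ (((C + r) * m : ℕ) : ENNReal) ^ d :=
      pow_le_pow_left' (Nat.cast_le.2 h3) d
    have h5 : (((C + r) * m : ℕ) : ENNReal) ^ d =
        ((C + r : ℕ) : ENNReal) ^ d * (m : ENNReal) ^ d := by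
      push_cast
      rw [mul_pow]
    calc μ (K ^ m) ≤ (μ P + 1) * ({v : V | Gr.dist x₀ v ≤ C * m + r}.ncard : ENNReal) := h1
    _ ≤ (μ P + 1) * ((c : ENNReal) * ((C * m + r : ℕ) : ENNReal) ^ d) := mul_le_mul_right h2 _
    _ ≤ (μ P + 1) * ((c : ENNReal) * (((C + r) * m : ℕ) : ENNReal) ^ d) :=
        mul_le_mul_right (mul_le_mul_right h4 _) _
    _ = (μ P + 1) * c * ((C + r : ℕ) : ENNReal) ^ d * (m : ENNReal) ^ d := by rw [h5]; ring
end

section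
/- Let G be a unimodular compactly generated locally compact group whose rough Cayley graph X is amenable as a metric space. Then G is amenable: for every ε > 0 and every positive integer m there is a compact set L ⊆ G with λ(L) > 0 and λ(LKᵐ ∖ L)/λ(L) < ε, where K is a compact symmetric generating neighbourhood and λ a Haar measure. -/
open Pointwise

/-- The `c`-boundary of a vertex set `A` in a graph. -/
noncomputable def grBoundary {V : Type*} (Gr : SimpleGraph V) (c : ℝ) (A : Set V) : Set V :=
  {x : V | (∃ a ∈ A, grDist Gr x a ≤ c) ∧ (∃ b ∈ Aᶜ, grDist Gr x b ≤ c)}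


open MeasureTheory
open scoped ENNReal NNReal


/-- Balls in a uniformly locally finite connected graph are finite with bounded size. -/
lemma aux_ball_finite {V : Type*} (Gr : SimpleGraph V) (hconn : Gr.Connected) (M : ℕ)
    (hM : ∀ v : V, (Gr.neighborSet v).Finite ∧ (Gr.neighborSet v).ncard ≤ M) (x : V) (n : ℕ) :
    {y : V | Gr.dist x y ≤ n}.Finite ∧ {y : V | Gr.dist x y ≤ n}.ncard ≤ (M + 1) ^ n := by
  induction n with
  | zero =>
    have h : {y : V | Gr.dist x y ≤ 0} = {x} := by
      ext y
      simp only [Set.mem_setOf_eq, Nat.le_zero, Set.mem_singleton_iff]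
      constructor
      · intro h
        rcases SimpleGraph.dist_eq_zero_iff_eq_or_not_reachable.mp h with h | h
        · exact h.symm
        · exact absurd (hconn x y) h
      · rintro rfl; simp [SimpleGraph.dist_self]
    rw [h]
    simp
  | succ n ih =>
    obtain ⟨hfin, hcard⟩ := ih
    set S := {y : V | Gr.dist x y ≤ n} with hS
    have hsub : {y : V | Gr.dist x y ≤ n + 1} ⊆ S ∪ ⋃ z ∈ S, Gr.neighborSet z := by
      intro y hy
      simp only [Set.mem_setOf_eq] at hy
      by_cases h : Gr.dist x y ≤ n
      · exact Or.inl h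
      · have hd : Gr.dist x y = n + 1 := le_antisymm hy (by omega)
        obtain ⟨p, hp⟩ := (hconn y x).exists_walk_length_eq_dist
        rw [SimpleGraph.dist_comm] at hd
        rw [hd] at hp
        cases p with
        | nil => simp at hp
        | cons hadj q =>
          rename_i z
          right
          refine Set.mem_biUnion (show z ∈ S from ?_) hadj.symm
          have hq := SimpleGraph.dist_le q
          have hcm : Gr.dist x z = Gr.dist z x := SimpleGraph.dist_comm
          simp only [SimpleGraph.Walk.length_cons] at hp
          simp only [hS, Set.mem_setOf_eq, hcm]
          omega
    have hfin2 : (S ∪ ⋃ z ∈ S, Gr.neighborSet z).Finite :=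
      hfin.union (hfin.biUnion fun z _ => (hM z).1)
    refine ⟨hfin2.subset hsub, ?_⟩
    have h1 : {y : V | Gr.dist x y ≤ n + 1}.ncard ≤ (S ∪ ⋃ z ∈ S, Gr.neighborSet z).ncard :=
      Set.ncard_le_ncard hsub hfin2
    have h2 : (S ∪ ⋃ z ∈ S, Gr.neighborSet z).ncard ≤ S.ncard + (⋃ z ∈ S, Gr.neighborSet z).ncard :=
      Set.ncard_union_le _ _
    have h3 : (⋃ z ∈ S, Gr.neighborSet z).ncard ≤ S.ncard * M := by
      classical
      have : (⋃ z ∈ S, Gr.neighborSet z) ⊆ ↑(hfin.toFinset.biUnion fun z => (hM z).1.toFinset) := by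
        intro y hy
        obtain ⟨z, hz, hyz⟩ := Set.mem_iUnion₂.mp hy
        simp only [Finset.coe_biUnion, Set.mem_iUnion, Finset.mem_coe,
          Set.Finite.mem_toFinset]
        exact ⟨z, hz, hyz⟩
      calc (⋃ z ∈ S, Gr.neighborSet z).ncard
          ≤ (↑(hfin.toFinset.biUnion fun z => (hM z).1.toFinset) : Set V).ncard :=
            Set.ncard_le_ncard this (Finset.finite_toSet _)
        _ = (hfin.toFinset.biUnion fun z => (hM z).1.toFinset).card := Set.ncard_coe_finset _
        _ ≤ ∑ z ∈ hfin.toFinset, ((hM z).1.toFinset).card := Finset.card_biUnion_le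
        _ ≤ ∑ _z ∈ hfin.toFinset, M := by
            refine Finset.sum_le_sum fun z _ => ?_
            rw [← Set.ncard_eq_toFinset_card _ (hM z).1]
            exact (hM z).2
        _ = hfin.toFinset.card * M := by rw [Finset.sum_const, smul_eq_mul]
        _ = S.ncard * M := by rw [← Set.ncard_eq_toFinset_card _ hfin]
    calc {y : V | Gr.dist x y ≤ n + 1}.ncard ≤ S.ncard + S.ncard * M := le_trans h1 (by omega)
      _ = S.ncard * (M + 1) := by ring
      _ ≤ (M + 1) ^ n * (M + 1) := by exact Nat.mul_le_mul_right _ hcard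
      _ = (M + 1) ^ (n + 1) := by ring

open scoped Classical in
/-- Bounded-multiplicity covering bound for measures. -/
lemma aux_multiplicity {G : Type*} [MeasurableSpace G] (μ : Measure G) {ι : Type*}
    (F : Finset ι) (s : ι → Set G) (hmeas : ∀ i ∈ F, MeasurableSet (s i))
    (N : ℕ) (hN : ∀ x, (F.filter (fun i => x ∈ s i)).card ≤ N) :
    ∑ i ∈ F, μ (s i) ≤ N * μ (⋃ i ∈ F, s i) := by
  classical
  have hU : MeasurableSet (⋃ i ∈ F, s i) := F.measurableSet_biUnion hmeas
  calc ∑ i ∈ F, μ (s i)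
      = ∑ i ∈ F, ∫⁻ x, (s i).indicator (fun _ => (1 : ℝ≥0∞)) x ∂μ := by
        refine Finset.sum_congr rfl fun i hi => ?_
        exact (lintegral_indicator_one (hmeas i hi)).symm
    _ = ∫⁻ x, ∑ i ∈ F, (s i).indicator (fun _ => (1 : ℝ≥0∞)) x ∂μ := by
        rw [lintegral_finset_sum]
        exact fun i hi => (measurable_const.indicator (hmeas i hi))
    _ ≤ ∫⁻ x, (⋃ i ∈ F, s i).indicator (fun _ => (N : ℝ≥0∞)) x ∂μ := by
        refine lintegral_mono fun x => ?_
        by_cases hx : x ∈ ⋃ i ∈ F, s i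
        · rw [Set.indicator_of_mem hx]
          have : ∑ i ∈ F, (s i).indicator (fun _ => (1 : ℝ≥0∞)) x
              = ((F.filter (fun i => x ∈ s i)).card : ℝ≥0∞) := by
            rw [Finset.card_filter]
            push_cast
            refine Finset.sum_congr rfl fun i _ => ?_
            by_cases h : x ∈ s i <;> simp [Set.indicator, h]
          rw [this]
          exact Nat.cast_le.mpr (hN x)
        · rw [Set.indicator_of_notMem hx]
          have : ∀ i ∈ F, (s i).indicator (fun _ => (1 : ℝ≥0∞)) x = 0 := by
            intro i hi
            refine Set.indicator_of_notMem (fun h => hx (Set.mem_biUnion hi h)) _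
          rw [Finset.sum_congr rfl this]
          simp
    _ = N * μ (⋃ i ∈ F, s i) := lintegral_indicator_const hU _

/-- In a topological group, the closure of a set is contained in its thickening
by a symmetric neighbourhood of the identity. -/
lemma aux_closure_subset_mul {G : Type*} [Group G] [TopologicalSpace G] [IsTopologicalGroup G]
    (S K : Set G) (hK : K ∈ nhds 1) (hsymm : K⁻¹ = K) : closure S ⊆ S * K := by
  intro x hx
  have hmem : (fun y => x⁻¹ * y) ⁻¹' K ∈ nhds x := by
    have hc : ContinuousAt (fun y => x⁻¹ * y) x := (continuous_const.mul continuous_id).continuousAt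
    exact hc.preimage_mem_nhds (by simpa using hK)
  obtain ⟨t, htK, htS⟩ := mem_closure_iff_nhds.mp hx _ hmem
  have hk : x⁻¹ * t ∈ K := htK
  have hkinv : (x⁻¹ * t)⁻¹ ∈ K := by rw [← hsymm]; exact Set.inv_mem_inv.mpr hk
  have : x = t * (x⁻¹ * t)⁻¹ := by group
  rw [this]
  exact Set.mul_mem_mul htS hkinv

set_option maxHeartbeats 1000000 in
/-- if the rough Cayley graph of a unimodular compactly generated
group is amenable as a metric space, then the group satisfies the Følner condition
(and hence is amenable). -/
theorem rough_cayley_graph_amenable_implies_folner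
    {G V : Type*} [Group G] [TopologicalSpace G] [IsTopologicalGroup G] [LocallyCompactSpace G]
    [MeasurableSpace G] [BorelSpace G]
    (μ : MeasureTheory.Measure G) [μ.IsHaarMeasure] [μ.IsMulRightInvariant]
    (K : Set G) (hKcomp : IsCompact K) (hKnhds : K ∈ nhds (1 : G)) (hKsymm : K⁻¹ = K)
    (hKgen : ∀ g : G, ∃ n : ℕ, g ∈ K ^ n)
    (Gr : SimpleGraph V) (act : G → V → V) (C₁ r₁ : ℝ) (hC₁ : 1 ≤ C₁) (hr₁ : 0 ≤ r₁)
    (hrcg : IsRoughCayleyGraph Gr act C₁ r₁)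
    (hXamen : ∀ c ε : ℝ, 0 < c → 0 < ε → ∃ A : Set V, A.Finite ∧ A.Nonempty ∧
      ((grBoundary Gr c A).ncard : ℝ) < ε * (A.ncard : ℝ)) :
    ∀ ε : ℝ, 0 < ε → ∀ m : ℕ, 0 < m → ∃ L : Set G,
      IsCompact L ∧ 0 < μ L ∧ μ ((L * K ^ m) \ L) < ENNReal.ofReal ε * μ L := by
  classical
  obtain ⟨hconn, ⟨M, hM⟩, hqa, hone, hcompat, hbdd, hproper, hcob⟩ := hrcg
  intro ε hε m hm
  obtain ⟨x₀⟩ := hconn.nonempty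
  set φ : G → V := fun s => act s x₀ with hφ
  have hC₁pos : (0 : ℝ) < C₁ := lt_of_lt_of_le one_pos hC₁
  -- basic metric facts
  have dnn : ∀ u v : V, 0 ≤ grDist Gr u v := fun u v => Nat.cast_nonneg _
  have dtri : ∀ u v w : V, grDist Gr u w ≤ grDist Gr u v + grDist Gr v w := by
    intro u v w
    have h := hconn.dist_triangle (u := u) (v := v) (w := w)
    unfold grDist
    exact_mod_cast h
  have dsymm : ∀ u v : V, grDist Gr u v = grDist Gr v u := by
    intro u v
    unfold grDist
    exact_mod_cast congrArg (Nat.cast : ℕ → ℝ) SimpleGraph.dist_comm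
  have dself : ∀ u : V, grDist Gr u u = 0 := by
    intro u
    simp [grDist, SimpleGraph.dist_self]
  -- the constants
  obtain ⟨R₀, hR₀⟩ := hbdd K hKcomp x₀
  set RK : ℝ := max R₀ 0 with hRK
  have hRKnn : 0 ≤ RK := le_max_right _ _
  set ρ : ℝ := C₁ * RK + 2 * r₁ with hρ
  have hρnn : 0 ≤ ρ := by positivity
  -- single-step displacement bound
  have step : ∀ t : G, ∀ k ∈ K, grDist Gr (φ (t * k)) (φ t) ≤ ρ := by
    intro t k hk
    have h1 : grDist Gr (act t (act k x₀)) (act (t * k) x₀) ≤ r₁ := hcompat t k x₀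
    have h2 : grDist Gr (act t (act k x₀)) (act t x₀) ≤ C₁ * grDist Gr (act k x₀) x₀ + r₁ :=
      ((hqa t).1 (act k x₀) x₀).2
    have h3 : grDist Gr (act k x₀) x₀ ≤ RK := le_trans (hR₀ k hk) (le_max_left _ _)
    have h4 : C₁ * grDist Gr (act k x₀) x₀ ≤ C₁ * RK :=
      mul_le_mul_of_nonneg_left h3 hC₁pos.le
    calc grDist Gr (φ (t * k)) (φ t)
        ≤ grDist Gr (φ (t * k)) (act t (act k x₀)) + grDist Gr (act t (act k x₀)) (φ t) :=
          dtri _ _ _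
      _ ≤ r₁ + (C₁ * RK + r₁) := by
          refine add_le_add ?_ (le_trans h2 (by linarith))
          rw [dsymm]
          exact h1
      _ = ρ := by rw [hρ]; ring
  -- iterated displacement bound
  have stepm : ∀ n : ℕ, ∀ k ∈ K ^ n, ∀ t : G, grDist Gr (φ (t * k)) (φ t) ≤ n * ρ := by
    intro n
    induction n with
    | zero =>
      intro k hk t
      rw [pow_zero, Set.mem_one] at hk
      subst hk
      rw [mul_one]
      simp [dself]
    | succ n ih =>
      intro k hk t
      rw [pow_succ] at hk
      obtain ⟨a, ha, b, hb, rfl⟩ := hk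
      have h1 := step (t * a) b hb
      have h2 := ih a ha t
      have h3 : grDist Gr (φ (t * a * b)) (φ t)
          ≤ grDist Gr (φ (t * a * b)) (φ (t * a)) + grDist Gr (φ (t * a)) (φ t) := dtri _ _ _
      rw [← mul_assoc]
      push_cast
      nlinarith [h1, h2, h3]
  -- the quasi-inverse of the orbit map
  choose tv htv using fun v => hcob x₀ v
  -- the bounded sets
  set B : ℝ → Set G := fun R => {s : G | grDist Gr (φ s) x₀ ≤ R} with hB
  have hBcl : ∀ R : ℝ, IsCompact (closure (B R)) := fun R => hproper R x₀
  -- localization of approximate preimages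
  have hloc : ∀ (v : V) (r : ℝ) (s : G), grDist Gr (φ s) v ≤ r →
      s ∈ tv v • B (C₁ * (r + 3 * r₁)) := by
    intro v r s hs
    have hcmp : grDist Gr (act (tv v) (act ((tv v)⁻¹ * s) x₀)) (act (tv v * ((tv v)⁻¹ * s)) x₀)
        ≤ r₁ := hcompat (tv v) ((tv v)⁻¹ * s) x₀
    have heq : tv v * ((tv v)⁻¹ * s) = s := by group
    rw [heq] at hcmp
    have hlow := ((hqa (tv v)).1 (φ ((tv v)⁻¹ * s)) x₀).1
    have hup : grDist Gr (act (tv v) (φ ((tv v)⁻¹ * s))) (act (tv v) x₀) ≤ r₁ + r + r₁ := by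
      calc grDist Gr (act (tv v) (φ ((tv v)⁻¹ * s))) (act (tv v) x₀)
          ≤ grDist Gr (act (tv v) (φ ((tv v)⁻¹ * s))) (φ s)
            + grDist Gr (φ s) (act (tv v) x₀) := dtri _ _ _
        _ ≤ r₁ + (grDist Gr (φ s) v + grDist Gr v (act (tv v) x₀)) := by
            refine add_le_add hcmp ?_
            exact dtri _ _ _
        _ ≤ r₁ + (r + r₁) := by
            refine add_le_add_right (add_le_add hs ?_) _
            rw [dsymm]
            exact htv v
        _ = r₁ + r + r₁ := by ring
    have hX : grDist Gr (φ ((tv v)⁻¹ * s)) x₀ ≤ C₁ * (r + 3 * r₁) := by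
      have h5 : C₁⁻¹ * grDist Gr (φ ((tv v)⁻¹ * s)) x₀ ≤ r + 3 * r₁ := by linarith
      have h6 : C₁ * (C₁⁻¹ * grDist Gr (φ ((tv v)⁻¹ * s)) x₀) ≤ C₁ * (r + 3 * r₁) :=
        mul_le_mul_of_nonneg_left h5 hC₁pos.le
      have h7 : C₁ * (C₁⁻¹ * grDist Gr (φ ((tv v)⁻¹ * s)) x₀)
          = grDist Gr (φ ((tv v)⁻¹ * s)) x₀ := by
        field_simp
      linarith
    rw [Set.mem_smul_set_iff_inv_smul_mem, smul_eq_mul]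
    exact hX
  -- r₂ and the approximate preimage sets
  set r₂ : ℝ := C₁ * RK + 3 * r₁ with hr₂
  have hr₂nn : 0 ≤ r₂ := by positivity
  have hTK : ∀ v : V, tv v • K ⊆ {s : G | grDist Gr (φ s) v ≤ r₂} := by
    intro v s hs
    obtain ⟨k, hk, hks⟩ := hs
    have hks' : tv v * k = s := hks
    subst hks' 
    show grDist Gr (φ (tv v * k)) v ≤ r₂
    calc grDist Gr (φ (tv v * k)) v
        ≤ grDist Gr (φ (tv v * k)) (φ (tv v)) + grDist Gr (φ (tv v)) v := dtri _ _ _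
      _ ≤ ρ + r₁ := add_le_add (step (tv v) k hk) (htv v)
      _ = r₂ := by rw [hρ, hr₂]; ring
  -- translation invariance for arbitrary sets
  have hμsmul : ∀ (t : G) (S : Set G), μ (t • S) = μ S := by
    intro t S
    have h : t • S = (fun h => t⁻¹ * h) ⁻¹' S := by
      ext y
      constructor
      · rintro ⟨u, hu, rfl⟩
        simpa [smul_eq_mul, inv_mul_cancel_left] using hu
      · intro hy
        exact ⟨t⁻¹ * y, hy, by simp [smul_eq_mul, mul_inv_cancel_left]⟩
    rw [h, MeasureTheory.measure_preimage_mul]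
  -- measure constants
  set U : Set G := interior K with hUdef
  have hUopen : IsOpen U := isOpen_interior
  have hUK : U ⊆ K := interior_subset
  have h1U : (1 : G) ∈ U := mem_interior_iff_mem_nhds.mpr hKnhds
  set κ : ℝ≥0∞ := μ U with hκ
  have hκpos : 0 < κ := hUopen.measure_pos μ ⟨1, h1U⟩
  have hκfin : κ < ⊤ := lt_of_le_of_lt (MeasureTheory.measure_mono hUK) hKcomp.measure_lt_top
  set β : ℝ≥0∞ := μ (closure (B (C₁ * (0 + 3 * r₁)))) with hβ
  have hβfin : β < ⊤ := (hBcl _).measure_lt_top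
  have hfiber : ∀ v : V, μ (φ ⁻¹' {v}) ≤ β := by
    intro v
    have hsub : φ ⁻¹' {v} ⊆ tv v • closure (B (C₁ * (0 + 3 * r₁))) := by
      intro s hs
      have h0 : grDist Gr (φ s) v ≤ 0 := by
        rw [Set.mem_preimage, Set.mem_singleton_iff] at hs
        rw [hs, dself]
      have := hloc v 0 s h0
      exact Set.smul_set_mono subset_closure this
    calc μ (φ ⁻¹' {v}) ≤ μ (tv v • closure (B (C₁ * (0 + 3 * r₁)))) :=
          MeasureTheory.measure_mono hsub
      _ = β := by rw [hμsmul]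
  -- the multiplicity constant
  set N : ℕ := (M + 1) ^ (Nat.ceil r₂) with hN
  have hNpos : 0 < N := by positivity
  have hNball : ∀ u : V, {w : V | grDist Gr u w ≤ r₂}.Finite ∧
      {w : V | grDist Gr u w ≤ r₂}.ncard ≤ N := by
    intro u
    have hsub : {w : V | grDist Gr u w ≤ r₂} ⊆ {w : V | Gr.dist u w ≤ Nat.ceil r₂} := by
      intro w hw
      simp only [Set.mem_setOf_eq] at hw ⊢
      have : (Gr.dist u w : ℝ) ≤ (Nat.ceil r₂ : ℝ) := le_trans hw (Nat.le_ceil r₂)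
      exact_mod_cast this
    obtain ⟨hf, hc⟩ := aux_ball_finite Gr hconn M hM u (Nat.ceil r₂)
    exact ⟨hf.subset hsub, le_trans (Set.ncard_le_ncard hsub hf) hc⟩
  -- the constant c for the boundary
  set c : ℝ := r₂ + ρ + m * ρ + 1 with hc
  have hcpos : 0 < c := by positivity
  -- the Følner constant for the graph
  set δ : ℝ := ε * κ.toReal / (N * (β.toReal + 1)) with hδ
  have hκtpos : 0 < κ.toReal := ENNReal.toReal_pos hκpos.ne' hκfin.ne
  have hδpos : 0 < δ := by
    apply div_pos (mul_pos hε hκtpos)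
    have h1 : (0 : ℝ) < N := by exact_mod_cast hNpos
    nlinarith [ENNReal.toReal_nonneg (a := β)]
  obtain ⟨A, hAfin, hAne, hbd⟩ := hXamen c δ hcpos hδpos
  set AF : Finset V := hAfin.toFinset with hAF
  -- the Følner set
  set GA : Set G := ⋃ v ∈ AF, {s : G | grDist Gr (φ s) v ≤ r₂} with hGA
  set L : Set G := closure GA with hL
  -- compactness of L
  set Dmax : ℝ := ∑ v ∈ AF, grDist Gr v x₀ with hDmax
  have hGAB : GA ⊆ B (r₂ + Dmax) := by
    intro s hs
    obtain ⟨v, hv, hsv⟩ := Set.mem_iUnion₂.mp hs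
    have h1 : grDist Gr v x₀ ≤ Dmax := by
      refine Finset.single_le_sum (fun w _ => dnn w x₀) hv
    have h2 : grDist Gr (φ s) x₀ ≤ grDist Gr (φ s) v + grDist Gr v x₀ := dtri _ _ _
    simp only [Set.mem_setOf_eq] at hsv ⊢
    rw [hB]
    simp only [Set.mem_setOf_eq]
    linarith
  have hLcomp : IsCompact L := by
    refine (hBcl (r₂ + Dmax)).of_isClosed_subset isClosed_closure (closure_mono hGAB)
  -- positivity of μ L
  obtain ⟨v₀, hv₀⟩ := hAne
  have hv₀F : v₀ ∈ AF := hAfin.mem_toFinset.mpr hv₀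
  have hsub₀ : tv v₀ • U ⊆ L := by
    refine le_trans (Set.smul_set_mono hUK) (le_trans (hTK v₀) (le_trans ?_ subset_closure))
    exact fun x hx => Set.mem_biUnion hv₀F hx
  have hμLpos : 0 < μ L := by
    calc (0 : ℝ≥0∞) < κ := hκpos
      _ = μ (tv v₀ • U) := (hμsmul _ _).symm
      _ ≤ μ L := MeasureTheory.measure_mono hsub₀
  have hμLfin : μ L < ⊤ := hLcomp.measure_lt_top
  -- lower bound for μ L
  have hlower : (A.ncard : ℝ≥0∞) * κ ≤ (N : ℝ≥0∞) * μ L := by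
    have hmeas : ∀ v ∈ AF, MeasurableSet (tv v • U) :=
      fun v _ => (hUopen.smul (tv v)).measurableSet
    have hmult : ∀ x : G, (AF.filter (fun v => x ∈ tv v • U)).card ≤ N := by
      intro x
      have hsub : (↑(AF.filter (fun v => x ∈ tv v • U)) : Set V)
          ⊆ {w : V | grDist Gr (φ x) w ≤ r₂} := by
        intro v hv
        simp only [Finset.coe_filter, Set.mem_setOf_eq] at hv
        have h2 := hTK v (Set.smul_set_mono hUK hv.2)
        simp only [Set.mem_setOf_eq] at h2 ⊢
        exact h2
      calc (AF.filter (fun v => x ∈ tv v • U)).card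
          = (↑(AF.filter (fun v => x ∈ tv v • U)) : Set V).ncard :=
            (Set.ncard_coe_finset _).symm
        _ ≤ {w : V | grDist Gr (φ x) w ≤ r₂}.ncard :=
            Set.ncard_le_ncard hsub (hNball (φ x)).1
        _ ≤ N := (hNball (φ x)).2
    have hmul := aux_multiplicity μ AF (fun v => tv v • U) hmeas N hmult
    have hsum : ∑ v ∈ AF, μ (tv v • U) = (AF.card : ℝ≥0∞) * κ := by
      rw [Finset.sum_congr rfl (fun v _ => hμsmul (tv v) U), Finset.sum_const, nsmul_eq_mul]
    have hUL : (⋃ v ∈ AF, tv v • U) ⊆ L := by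
      refine Set.iUnion₂_subset fun v hv => ?_
      refine le_trans (Set.smul_set_mono hUK)
        (le_trans (hTK v) (le_trans ?_ subset_closure))
      exact fun x hx => Set.mem_biUnion hv hx
    have hcard : A.ncard = AF.card := Set.ncard_eq_toFinset_card A hAfin
    calc (A.ncard : ℝ≥0∞) * κ = (AF.card : ℝ≥0∞) * κ := by rw [hcard]
      _ = ∑ v ∈ AF, μ (tv v • U) := hsum.symm
      _ ≤ (N : ℝ≥0∞) * μ (⋃ v ∈ AF, tv v • U) := hmul
      _ ≤ (N : ℝ≥0∞) * μ L := by
          exact mul_le_mul_right (MeasureTheory.measure_mono hUL) _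
  -- the boundary
  set bdry : Set V := grBoundary Gr c A with hbdry
  have hbdfin : bdry.Finite := by
    have hsub : bdry ⊆ ⋃ a ∈ AF, {x : V | Gr.dist a x ≤ Nat.ceil c} := by
      rintro x ⟨⟨a, ha, hxa⟩, -⟩
      refine Set.mem_biUnion (hAfin.mem_toFinset.mpr ha) ?_
      simp only [Set.mem_setOf_eq]
      have h1 : (Gr.dist x a : ℝ) ≤ (Nat.ceil c : ℝ) := le_trans hxa (Nat.le_ceil c)
      have h2 : Gr.dist x a ≤ Nat.ceil c := by exact_mod_cast h1
      rw [SimpleGraph.dist_comm] at h2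
      exact h2
    exact (Set.Finite.biUnion AF.finite_toSet
      (fun a _ => (aux_ball_finite Gr hconn M hM a (Nat.ceil c)).1)).subset hsub
  set BF : Finset V := hbdfin.toFinset with hBF
  -- the key inclusion
  have hincl : (L * K ^ m) \ L ⊆ φ ⁻¹' bdry := by
    rintro x ⟨hxLK, hxnL⟩
    obtain ⟨s, hsL, k, hk, rfl⟩ := hxLK
    have hsGK : s ∈ GA * K := aux_closure_subset_mul GA K hKnhds hKsymm hsL
    obtain ⟨s', hs', k₀, hk₀, rfl⟩ := hsGK
    obtain ⟨v, hvF, hsv⟩ := Set.mem_iUnion₂.mp hs'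
    have hvA : v ∈ A := hAfin.mem_toFinset.mp hvF
    simp only [Set.mem_setOf_eq] at hsv
    have h1 : grDist Gr (φ (s' * k₀)) v ≤ ρ + r₂ := by
      calc grDist Gr (φ (s' * k₀)) v
          ≤ grDist Gr (φ (s' * k₀)) (φ s') + grDist Gr (φ s') v := dtri _ _ _
        _ ≤ ρ + r₂ := add_le_add (step s' k₀ hk₀) hsv
    have h2 : grDist Gr (φ (s' * k₀ * k)) (φ (s' * k₀)) ≤ m * ρ := stepm m k hk (s' * k₀)
    have hnotA : φ (s' * k₀ * k) ∈ Aᶜ := by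
      intro hmem
      apply hxnL
      refine subset_closure ?_
      refine Set.mem_biUnion (hAfin.mem_toFinset.mpr hmem) ?_
      simp only [Set.mem_setOf_eq]
      rw [dself]
      exact hr₂nn
    refine ⟨⟨v, hvA, ?_⟩, ⟨φ (s' * k₀ * k), hnotA, ?_⟩⟩
    · calc grDist Gr (φ (s' * k₀ * k)) v
          ≤ grDist Gr (φ (s' * k₀ * k)) (φ (s' * k₀)) + grDist Gr (φ (s' * k₀)) v := dtri _ _ _
        _ ≤ m * ρ + (ρ + r₂) := add_le_add h2 h1
        _ ≤ c := by rw [hc]; linarith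
    · rw [dself]
      exact hcpos.le
  -- upper bound for the measure of the difference
  have hupper : μ ((L * K ^ m) \ L) ≤ (bdry.ncard : ℝ≥0∞) * β := by
    have hun : φ ⁻¹' bdry = ⋃ v ∈ BF, φ ⁻¹' {v} := by
      ext x
      simp only [Set.mem_preimage, Set.mem_iUnion, Set.mem_singleton_iff,
        Set.Finite.mem_toFinset, hBF]
      constructor
      · intro hx; exact ⟨φ x, hx, rfl⟩
      · rintro ⟨v, hv, hvx⟩; rw [hvx]; exact hv
    calc μ ((L * K ^ m) \ L) ≤ μ (φ ⁻¹' bdry) := MeasureTheory.measure_mono hincl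
      _ = μ (⋃ v ∈ BF, φ ⁻¹' {v}) := by rw [hun]
      _ ≤ ∑ v ∈ BF, μ (φ ⁻¹' {v}) := measure_biUnion_finset_le _ _
      _ ≤ ∑ _v ∈ BF, β := Finset.sum_le_sum (fun v _ => hfiber v)
      _ = (BF.card : ℝ≥0∞) * β := by rw [Finset.sum_const, nsmul_eq_mul]
      _ = (bdry.ncard : ℝ≥0∞) * β := by
          rw [Set.ncard_eq_toFinset_card bdry hbdfin]
  -- final numeric computation
  refine ⟨L, hLcomp, hμLpos, ?_⟩
  have hdfin : μ ((L * K ^ m) \ L) ≠ ⊤ := by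
    refine ne_of_lt (lt_of_le_of_lt hupper ?_)
    exact ENNReal.mul_lt_top (ENNReal.natCast_lt_top _) hβfin
  have hrw : ENNReal.ofReal ε * μ L = ENNReal.ofReal (ε * (μ L).toReal) := by
    rw [ENNReal.ofReal_mul hε.le, ENNReal.ofReal_toReal hμLfin.ne]
  rw [hrw]
  rw [ENNReal.lt_ofReal_iff_toReal_lt hdfin]
  -- real-number bookkeeping
  set p : ℝ := (bdry.ncard : ℝ) with hp
  set a : ℝ := (A.ncard : ℝ) with ha
  set βt : ℝ := β.toReal with hβt
  set κt : ℝ := κ.toReal with hκt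
  set Lt : ℝ := (μ L).toReal with hLt
  have hpnn : 0 ≤ p := Nat.cast_nonneg _
  have hβtnn : 0 ≤ βt := ENNReal.toReal_nonneg
  have hNR : (0 : ℝ) < N := by exact_mod_cast hNpos
  have h1 : (μ ((L * K ^ m) \ L)).toReal ≤ p * βt := by
    have := ENNReal.toReal_mono
      (ENNReal.mul_lt_top (ENNReal.natCast_lt_top _) hβfin).ne hupper
    rwa [ENNReal.toReal_mul, ENNReal.toReal_natCast] at this
  have h2 : a * κt ≤ N * Lt := by
    have hfin2 : ((N : ℝ≥0∞) * μ L) ≠ ⊤ :=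
      (ENNReal.mul_lt_top (ENNReal.natCast_lt_top _) hμLfin).ne
    have := ENNReal.toReal_mono hfin2 hlower
    rwa [ENNReal.toReal_mul, ENNReal.toReal_mul, ENNReal.toReal_natCast,
      ENNReal.toReal_natCast] at this
  have h3 : δ * a * (βt + 1) = ε * κt * a / N := by
    rw [hδ]
    field_simp
  have h4 : ε * κt * a / N ≤ ε * Lt := by
    rw [div_le_iff₀ hNR]
    nlinarith [mul_le_mul_of_nonneg_left h2 hε.le]
  calc (μ ((L * K ^ m) \ L)).toReal ≤ p * βt := h1
    _ ≤ p * (βt + 1) := by nlinarith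
    _ < δ * a * (βt + 1) := by
        have := mul_lt_mul_of_pos_right hbd (by linarith : (0:ℝ) < βt + 1)
        linarith
    _ = ε * κt * a / N := h3
    _ ≤ ε * Lt := h4
end
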